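/- arXiv:2001.02373 — 9 statements merged into one kernel-verified Lean document; each statement's English description precedes it below -/
import Mathlib

section
/- Let $T$ be a finite tree (partially ordered set in which the set of elements above any given element is totally ordered) and let $I$ be the Hardy operator $If(\alpha) = \sum_{\alpha' \geq \alpha} f(\alpha')$. Then for any nonnegative functions $f, g : T \to [0,\infty)$ and every $\alpha \in T$, one has $(If)(\alpha) \cdot (Ig)(\alpha) \leq I(If \cdot g + f \cdot Ig)(\alpha)$. -/
open Finset
open scoped Classical

/-- A tree order: the set of elements above any given element is totally ordered. -/
def IsTreeOrder (T : Type*) [PartialOrder T] : Prop :=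
  ∀ ω a b : T, ω ≤ a → ω ≤ b → a ≤ b ∨ b ≤ a

/-- The Hardy operator `I f α = ∑_{α' ≥ α} f α'`. -/
noncomputable def hI {T : Type*} [Fintype T] [PartialOrder T] (f : T → ℝ) (a : T) : ℝ :=
  ∑ b, if a ≤ b then f b else 0

/-- The adjoint Hardy operator `I* f β = ∑_{α ≤ β} f α`. -/
noncomputable def hIstar {T : Type*} [Fintype T] [PartialOrder T] (f : T → ℝ) (b : T) : ℝ :=
  ∑ a, if a ≤ b then f a else 0

/-- `b` is a child of `β`: a maximal element of the set of elements strictly below `β`. -/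
def IsChild {T : Type*} [PartialOrder T] (b β : T) : Prop :=
  b < β ∧ ∀ c, b < c → c < β → False

/-- The difference operator `Δ f β = f β - ∑_{β' ∈ ch β} f β'`. -/
noncomputable def hDelta {T : Type*} [Fintype T] [PartialOrder T] (f : T → ℝ) (β : T) : ℝ :=
  f β - ∑ b, if IsChild b β then f b else 0

/-- A superadditive function on a tree: `f β ≥ ∑_{β' ∈ ch β} f β'` for all `β`. -/
def Superadd {T : Type*} [Fintype T] [PartialOrder T] (f : T → ℝ) : Prop :=
  ∀ β : T, (∑ b, if IsChild b β then f b else 0) ≤ f β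

theorem stmt0 {T : Type*} [Fintype T] [PartialOrder T] (htree : IsTreeOrder T)
    (f g : T → ℝ) (hf : ∀ a, 0 ≤ f a) (hg : ∀ a, 0 ≤ g a) (α : T) :
    hI f α * hI g α ≤ hI (fun a => hI f a * g a + f a * hI g a) α := by
  classical
  have hL : hI f α * hI g α
      = ∑ p : T × T, if α ≤ p.1 ∧ α ≤ p.2 then f p.1 * g p.2 else 0 := by
    rw [hI, hI, Finset.sum_mul_sum, Fintype.sum_prod_type]
    apply Finset.sum_congr rfl; intro a _
    apply Finset.sum_congr rfl; intro b _
    by_cases h1 : α ≤ a <;> by_cases h2 : α ≤ b <;> simp [h1, h2]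
  have hR : hI (fun a => hI f a * g a + f a * hI g a) α =
      (∑ p : T × T, if α ≤ p.2 ∧ p.2 ≤ p.1 then f p.1 * g p.2 else 0)
      + (∑ p : T × T, if α ≤ p.1 ∧ p.1 ≤ p.2 then f p.1 * g p.2 else 0) := by
    rw [hI]
    have e1 : (∑ p : T × T, if α ≤ p.2 ∧ p.2 ≤ p.1 then f p.1 * g p.2 else 0)
        = ∑ c, if α ≤ c then hI f c * g c else 0 := by
      rw [Fintype.sum_prod_type]
      rw [Finset.sum_comm]
      apply Finset.sum_congr rfl; intro c _
      by_cases h1 : α ≤ c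
      · simp only [h1, true_and, if_true, hI, Finset.sum_mul]
        apply Finset.sum_congr rfl; intro a _
        by_cases h2 : c ≤ a <;> simp [h2]
      · simp [h1]
    have e2 : (∑ p : T × T, if α ≤ p.1 ∧ p.1 ≤ p.2 then f p.1 * g p.2 else 0)
        = ∑ c, if α ≤ c then f c * hI g c else 0 := by
      rw [Fintype.sum_prod_type]
      apply Finset.sum_congr rfl; intro c _
      by_cases h1 : α ≤ c
      · simp only [h1, true_and, if_true, hI, Finset.mul_sum]
        apply Finset.sum_congr rfl; intro b _
        by_cases h2 : c ≤ b <;> simp [h2]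
      · simp [h1]
    rw [e1, e2, ← Finset.sum_add_distrib]
    apply Finset.sum_congr rfl; intro c _
    by_cases h1 : α ≤ c <;> simp [h1]
  rw [hL, hR, ← Finset.sum_add_distrib]
  apply Finset.sum_le_sum
  intro p _
  have hfg : 0 ≤ f p.1 * g p.2 := mul_nonneg (hf _) (hg _)
  have hA : (0:ℝ) ≤ if α ≤ p.2 ∧ p.2 ≤ p.1 then f p.1 * g p.2 else 0 := by
    by_cases hc : α ≤ p.2 ∧ p.2 ≤ p.1 <;> simp [hc, hfg]
  have hB : (0:ℝ) ≤ if α ≤ p.1 ∧ p.1 ≤ p.2 then f p.1 * g p.2 else 0 := by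
    by_cases hc : α ≤ p.1 ∧ p.1 ≤ p.2 <;> simp [hc, hfg]
  by_cases hc : α ≤ p.1 ∧ α ≤ p.2
  · rw [if_pos hc]
    rcases htree α p.1 p.2 hc.1 hc.2 with h | h
    · have eB : (if α ≤ p.1 ∧ p.1 ≤ p.2 then f p.1 * g p.2 else 0) = f p.1 * g p.2 :=
        if_pos ⟨hc.1, h⟩
      linarith
    · have eA : (if α ≤ p.2 ∧ p.2 ≤ p.1 then f p.1 * g p.2 else 0) = f p.1 * g p.2 :=
        if_pos ⟨hc.2, h⟩
      linarith
  · rw [if_neg hc]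
    linarith
end

section
/- Let $T$ be a finite tree and let $f, g : T \to [0,\infty)$ with $f$ superadditive (i.e. $f(\beta) \geq \sum_{\beta' \in \mathrm{ch}(\beta)} f(\beta')$ for all $\beta$). Then for every $\beta \in T$, $I^*(fg)(\beta) \leq I^*(\Delta f \cdot Ig)(\beta)$. -/
open Finset
open scoped Classical

lemma parent_unique {T : Type*} [PartialOrder T] (htree : IsTreeOrder T)
    {b α α' : T} (h : IsChild b α) (h' : IsChild b α') : α = α' := by
  rcases htree b α α' h.1.le h'.1.le with hle | hle
  · rcases eq_or_lt_of_le hle with h1 | h1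
    · exact h1
    · exact (h'.2 α h.1 h1).elim
  · rcases eq_or_lt_of_le hle with h1 | h1
    · exact h1.symm
    · exact (h.2 α' h'.1 h1).elim

lemma parent_exists {T : Type*} [Fintype T] [PartialOrder T]
    {b γ : T} (h : b < γ) : ∃ α, α ≤ γ ∧ IsChild b α := by
  classical
  have hne : (univ.filter (fun c => b < c ∧ c ≤ γ)).Nonempty := ⟨γ, by simp [h]⟩
  obtain ⟨m, hm, hmin⟩ : ∃ m ∈ univ.filter (fun c => b < c ∧ c ≤ γ), ∀ x ∈ univ.filter (fun c => b < c ∧ c ≤ γ), ¬ x < m :=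
    (Finset.exists_minimal hne).imp fun m h => ⟨h.1, fun x hx hlt => lt_irrefl _ (lt_of_lt_of_le hlt (h.2 hx hlt.le))⟩
  simp only [mem_filter, mem_univ, true_and] at hm
  refine ⟨m, hm.2, hm.1, fun c hbc hcm => ?_⟩
  exact hmin c (by simp [hbc, hcm.le.trans hm.2]) hcm

lemma istar_delta {T : Type*} [Fintype T] [PartialOrder T] (htree : IsTreeOrder T)
    (f : T → ℝ) (γ : T) : hIstar (hDelta f) γ = f γ := by
  classical
  unfold hIstar hDelta
  have step1 : ∀ a : T, (if a ≤ γ then f a - ∑ b, (if IsChild b a then f b else 0) else 0)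
      = (if a ≤ γ then f a else 0) - ∑ b, (if a ≤ γ ∧ IsChild b a then f b else 0) := by
    intro a
    split_ifs with h
    · congr 1
      exact Finset.sum_congr rfl fun b _ => by split_ifs with h1 h2 <;> simp_all
    · simp [h]
  rw [Finset.sum_congr rfl fun a _ => step1 a, Finset.sum_sub_distrib, Finset.sum_comm]
  have step2 : ∀ b : T, (∑ a, if a ≤ γ ∧ IsChild b a then f b else 0)
      = if b < γ then f b else 0 := by
    intro b
    split_ifs with hb
    · obtain ⟨α₀, hα₀γ, hα₀⟩ := parent_exists hb
      rw [Finset.sum_eq_single_of_mem α₀ (mem_univ _)]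
      · rw [if_pos ⟨hα₀γ, hα₀⟩]
      · intro a _ hne
        rw [if_neg]
        rintro ⟨_, hch⟩
        exact hne (parent_unique htree hch hα₀)
    · apply Finset.sum_eq_zero
      intro a _
      rw [if_neg]
      rintro ⟨haγ, hch⟩
      exact hb (lt_of_lt_of_le hch.1 haγ)
  rw [Finset.sum_congr rfl fun b _ => step2 b]
  have step3 : ∀ a : T, (if a ≤ γ then f a else 0)
      = (if a = γ then f a else 0) + (if a < γ then f a else 0) := by
    intro a
    by_cases h : a ≤ γ
    · rcases h.lt_or_eq with h1 | h1
      · rw [if_pos h, if_neg h1.ne, if_pos h1]; ring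
      · rw [if_pos h, if_pos h1, if_neg (by simp [h1])]; ring
    · rw [if_neg h, if_neg (fun he => h (le_of_eq he)), if_neg (fun hl => h hl.le)]; ring
  rw [Finset.sum_congr rfl fun a _ => step3 a, Finset.sum_add_distrib]
  simp

theorem stmt3 {T : Type*} [Fintype T] [PartialOrder T] (htree : IsTreeOrder T)
    (f g : T → ℝ) (hf : ∀ a, 0 ≤ f a) (hg : ∀ a, 0 ≤ g a)
    (hsup : Superadd f) (β : T) :
    hIstar (fun a => f a * g a) β ≤ hIstar (fun a => hDelta f a * hI g a) β := by
  classical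
  unfold hIstar
  have expand : ∀ a : T, (if a ≤ β then hDelta f a * hI g a else 0)
      = ∑ c, if a ≤ β ∧ a ≤ c then hDelta f a * g c else 0 := by
    intro a
    unfold hI
    split_ifs with h
    · rw [Finset.mul_sum]
      exact Finset.sum_congr rfl fun c _ => by split_ifs with h1 h2 <;> simp_all
    · symm; apply Finset.sum_eq_zero; intro c _; rw [if_neg (fun hh => h hh.1)]
  rw [Finset.sum_congr rfl fun a _ => expand a, Finset.sum_comm]
  apply Finset.sum_le_sum
  intro c _
  by_cases hc : c ≤ β
  · rw [if_pos hc]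
    have key : (∑ a, if a ≤ β ∧ a ≤ c then hDelta f a * g c else 0)
        = (∑ a, if a ≤ c then hDelta f a else 0) * g c := by
      rw [Finset.sum_mul]
      refine Finset.sum_congr rfl fun a _ => ?_
      by_cases h2 : a ≤ c
      · rw [if_pos ⟨h2.trans hc, h2⟩, if_pos h2]
      · rw [if_neg (fun hh => h2 hh.2), if_neg h2, zero_mul]
    rw [key]
    have hd := istar_delta htree f c
    unfold hIstar at hd
    rw [hd]
  · rw [if_neg hc]
    apply Finset.sum_nonneg
    intro a _
    split_ifs with h
    · have hda : 0 ≤ hDelta f a := by unfold hDelta; exact sub_nonneg.mpr (hsup a)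
      exact mul_nonneg hda (hg c)
    · exact le_refl 0
end

section
/- Let $T^2 = T_1 \times T_2$ be a product of two finite trees with the product order, and let $\mathbb{I} = I_1 I_2$ be the bi-parameter Hardy operator $\mathbb{I} f(\alpha) = \sum_{\alpha' \geq \alpha} f(\alpha')$. Then for any nonnegative functions $f, g : T^2 \to [0,\infty)$, pointwise $(\mathbb{I} f)(\mathbb{I} g) \leq \mathbb{I}\big( \mathbb{I} f \cdot g + I_1 f \cdot I_2 g + I_2 f \cdot I_1 g + f \cdot \mathbb{I} g \big)$, where $I_1, I_2$ are the Hardy operators acting in the first and second coordinate respectively. -/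
open Finset
open scoped Classical

/-- The Hardy operator acting in the first coordinate of a bi-tree. -/
noncomputable def hI1 {T1 T2 : Type*} [Fintype T1] [PartialOrder T1]
    (f : T1 × T2 → ℝ) (a : T1 × T2) : ℝ :=
  ∑ b : T1, if a.1 ≤ b then f (b, a.2) else 0

/-- The Hardy operator acting in the second coordinate of a bi-tree. -/
noncomputable def hI2 {T1 T2 : Type*} [Fintype T2] [PartialOrder T2]
    (f : T1 × T2 → ℝ) (a : T1 × T2) : ℝ :=
  ∑ b : T2, if a.2 ≤ b then f (a.1, b) else 0

/-- Superadditivity in the first parameter separately. -/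
def Superadd1 {T1 T2 : Type*} [Fintype T1] [PartialOrder T1]
    (f : T1 × T2 → ℝ) : Prop :=
  ∀ (β : T1) (a2 : T2), (∑ b, if IsChild b β then f (b, a2) else 0) ≤ f (β, a2)

/-- Superadditivity in the second parameter separately. -/
def Superadd2 {T1 T2 : Type*} [Fintype T2] [PartialOrder T2]
    (f : T1 × T2 → ℝ) : Prop :=
  ∀ (a1 : T1) (β : T2), (∑ b, if IsChild b β then f (a1, b) else 0) ≤ f (a1, β)

lemma ite_le_ite' {c d : Prop} [Decidable c] [Decidable d] {v w : ℝ}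
    (h : c → d) (hvw : c → v = w) (hw : 0 ≤ w) :
    (if c then v else 0) ≤ (if d then w else 0) := by
  split_ifs with hc hd hd
  · exact (hvw hc).le
  · exact absurd (h hc) hd
  · exact hw
  · exact le_refl 0

lemma mul_expand' {A B : Type*} [Fintype A] [Fintype B]
    (p : A → Prop) (q : B → Prop) (u : A → ℝ) (v : B → ℝ) :
    (∑ x, if p x then u x else 0) * (∑ y, if q y then v y else 0)
      = ∑ x, ∑ y, if p x ∧ q y then u x * v y else 0 := by
  rw [Finset.sum_mul_sum]
  refine Finset.sum_congr rfl fun x _ => Finset.sum_congr rfl fun y _ => ?_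
  split_ifs <;> simp_all

lemma mul_expand2 {A B : Type*} [Fintype A] [Fintype B]
    (p : A → Prop) (q : B → Prop) (u : A → ℝ) (v : B → ℝ) :
    (∑ x, if p x then u x else 0) * (∑ y, if q y then v y else 0)
      = ∑ e : A × B, if p e.1 ∧ q e.2 then u e.1 * v e.2 else 0 := by
  rw [mul_expand']
  exact (Fintype.sum_prod_type' (fun x y => if p x ∧ q y then u x * v y else 0)).symm

lemma ite_sum_swallow {A : Type*} [Fintype A] {c : Prop} [Decidable c]
    (P : A → Prop) (V : A → ℝ) :
    (if c then (∑ x, if P x then V x else 0) else 0)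
      = ∑ x, if c ∧ P x then V x else 0 := by
  split_ifs with h
  · exact Finset.sum_congr rfl fun x _ => by split_ifs <;> simp_all
  · exact (Finset.sum_eq_zero fun x _ => if_neg (fun hc => h hc.1)).symm

lemma key1 {T1 T2 : Type*} [Fintype T1] [Fintype T2] (H : (T1×T2) → (T1×T2) → ℝ) :
    ∑ δ : T1×T2, ∑ ε : T1×T2, H δ ε
      = ∑ β : T1×T2, ∑ γ : T1×T2, H (γ.1, β.2) (β.1, γ.2) :=
  calc ∑ δ : T1×T2, ∑ ε : T1×T2, H δ ε
      = ∑ p : (T1×T2)×(T1×T2), H p.1 p.2 := (Fintype.sum_prod_type' _).symm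
    _ = ∑ p : (T1×T2)×(T1×T2), H (p.2.1, p.1.2) (p.1.1, p.2.2) :=
        Fintype.sum_equiv
          ⟨fun p => ((p.2.1,p.1.2),(p.1.1,p.2.2)), fun p => ((p.2.1,p.1.2),(p.1.1,p.2.2)),
            fun ⟨⟨_,_⟩,⟨_,_⟩⟩ => rfl, fun ⟨⟨_,_⟩,⟨_,_⟩⟩ => rfl⟩ _ _ (fun ⟨⟨_,_⟩,⟨_,_⟩⟩ => rfl)
    _ = ∑ β : T1×T2, ∑ γ : T1×T2, H (γ.1, β.2) (β.1, γ.2) :=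
        Fintype.sum_prod_type' (fun (β γ : T1×T2) => H (γ.1, β.2) (β.1, γ.2))

lemma key2 {T1 T2 : Type*} [Fintype T1] [Fintype T2] (H : (T1×T2) → (T1×T2) → ℝ) :
    ∑ δ : T1×T2, ∑ ε : T1×T2, H δ ε
      = ∑ β : T1×T2, ∑ γ : T1×T2, H (β.1, γ.2) (γ.1, β.2) :=
  calc ∑ δ : T1×T2, ∑ ε : T1×T2, H δ ε
      = ∑ p : (T1×T2)×(T1×T2), H p.1 p.2 := (Fintype.sum_prod_type' _).symm
    _ = ∑ p : (T1×T2)×(T1×T2), H (p.1.1, p.2.2) (p.2.1, p.1.2) :=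
        Fintype.sum_equiv
          ⟨fun p => ((p.1.1,p.2.2),(p.2.1,p.1.2)), fun p => ((p.1.1,p.2.2),(p.2.1,p.1.2)),
            fun ⟨⟨_,_⟩,⟨_,_⟩⟩ => rfl, fun ⟨⟨_,_⟩,⟨_,_⟩⟩ => rfl⟩ _ _ (fun ⟨⟨_,_⟩,⟨_,_⟩⟩ => rfl)
    _ = ∑ β : T1×T2, ∑ γ : T1×T2, H (β.1, γ.2) (γ.1, β.2) :=
        Fintype.sum_prod_type' (fun (β γ : T1×T2) => H (β.1, γ.2) (γ.1, β.2))

set_option maxHeartbeats 1000000 in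
theorem stmt4 {T1 T2 : Type*} [Fintype T1] [PartialOrder T1] [Fintype T2] [PartialOrder T2]
    (h1 : IsTreeOrder T1) (h2 : IsTreeOrder T2)
    (f g : T1 × T2 → ℝ) (hf : ∀ a, 0 ≤ f a) (hg : ∀ a, 0 ≤ g a) (α : T1 × T2) :
    hI f α * hI g α ≤
      hI (fun a => hI f a * g a + hI1 f a * hI2 g a + hI2 f a * hI1 g a + f a * hI g a) α := by
  classical
  have hfg : ∀ β γ : T1 × T2, (0:ℝ) ≤ f β * g γ := fun β γ => mul_nonneg (hf β) (hg γ)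
  -- expand the RHS into four sums
  have hRHS : hI (fun a => hI f a * g a + hI1 f a * hI2 g a + hI2 f a * hI1 g a + f a * hI g a) α
      = (∑ δ : T1 × T2, if α ≤ δ then hI f δ * g δ else 0)
        + (∑ δ : T1 × T2, if α ≤ δ then hI1 f δ * hI2 g δ else 0)
        + (∑ δ : T1 × T2, if α ≤ δ then hI2 f δ * hI1 g δ else 0)
        + (∑ δ : T1 × T2, if α ≤ δ then f δ * hI g δ else 0) := by
    rw [hI, ← Finset.sum_add_distrib, ← Finset.sum_add_distrib, ← Finset.sum_add_distrib]
    refine Finset.sum_congr rfl fun δ _ => ?_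
    split_ifs <;> ring
  rw [hRHS]; clear hRHS
  -- expand the LHS into a double sum and split into four pieces
  have hLHS : hI f α * hI g α
      = (∑ β : T1 × T2, ∑ γ : T1 × T2,
          if (α ≤ β ∧ α ≤ γ) ∧ γ.1 ≤ β.1 ∧ γ.2 ≤ β.2 then f β * g γ else 0)
        + (∑ β : T1 × T2, ∑ γ : T1 × T2,
          if (α ≤ β ∧ α ≤ γ) ∧ γ.1 ≤ β.1 ∧ ¬ γ.2 ≤ β.2 then f β * g γ else 0)
        + (∑ β : T1 × T2, ∑ γ : T1 × T2,
          if (α ≤ β ∧ α ≤ γ) ∧ ¬ γ.1 ≤ β.1 ∧ γ.2 ≤ β.2 then f β * g γ else 0)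
        + (∑ β : T1 × T2, ∑ γ : T1 × T2,
          if (α ≤ β ∧ α ≤ γ) ∧ ¬ γ.1 ≤ β.1 ∧ ¬ γ.2 ≤ β.2 then f β * g γ else 0) := by
    rw [hI, hI, mul_expand']
    rw [← Finset.sum_add_distrib, ← Finset.sum_add_distrib, ← Finset.sum_add_distrib]
    refine Finset.sum_congr rfl fun β _ => ?_
    rw [← Finset.sum_add_distrib, ← Finset.sum_add_distrib, ← Finset.sum_add_distrib]
    refine Finset.sum_congr rfl fun γ _ => ?_
    by_cases hc : α ≤ β ∧ α ≤ γ <;> by_cases hp : γ.1 ≤ β.1 <;> by_cases hq : γ.2 ≤ β.2 <;>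
      simp [hc, hp, hq]
  rw [hLHS]; clear hLHS
  refine add_le_add (add_le_add (add_le_add ?_ ?_) ?_) ?_
  -- Case A : γ ≤ β, goes to I(If · g)
  · have hA : (∑ δ : T1 × T2, if α ≤ δ then hI f δ * g δ else 0)
        = ∑ β : T1 × T2, ∑ γ : T1 × T2, if α ≤ γ ∧ γ ≤ β then f β * g γ else 0 := by
      have e1 : ∀ δ : T1 × T2, (if α ≤ δ then hI f δ * g δ else 0)
          = ∑ ε : T1 × T2, if α ≤ δ ∧ δ ≤ ε then f ε * g δ else 0 := by
        intro δ
        rw [hI, Finset.sum_mul]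
        split_ifs with h
        · refine Finset.sum_congr rfl fun ε _ => ?_
          rw [ite_mul, zero_mul]
          by_cases h3 : δ ≤ ε
          · rw [if_pos h3, if_pos ⟨h, h3⟩]
          · rw [if_neg h3, if_neg fun hc => h3 hc.2]
        · exact (Finset.sum_eq_zero fun ε _ => if_neg (fun hc => h hc.1)).symm
      simp only [e1]
      exact Finset.sum_comm
    rw [hA]
    refine Finset.sum_le_sum fun β _ => Finset.sum_le_sum fun γ _ => ?_
    exact ite_le_ite' (fun h => ⟨h.1.2, Prod.le_def.mpr ⟨h.2.1, h.2.2⟩⟩) (fun _ => rfl) (hfg β γ)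
  -- Case B : γ1 ≤ β1, β2 < γ2, goes to I(I1 f · I2 g)
  · have hB : (∑ δ : T1 × T2, if α ≤ δ then hI1 f δ * hI2 g δ else 0)
        = ∑ β : T1 × T2, ∑ γ : T1 × T2,
            if α ≤ (γ.1, β.2) ∧ γ.1 ≤ β.1 ∧ β.2 ≤ γ.2
            then f (β.1, β.2) * g (γ.1, γ.2) else 0 := by
      have e1 : ∀ δ : T1 × T2, (if α ≤ δ then hI1 f δ * hI2 g δ else 0)
          = ∑ ε : T1 × T2, if α ≤ δ ∧ δ.1 ≤ ε.1 ∧ δ.2 ≤ ε.2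
              then f (ε.1, δ.2) * g (δ.1, ε.2) else 0 := by
        intro δ
        rw [hI1, hI2, mul_expand2]
        split_ifs with h
        · refine Finset.sum_congr rfl fun ε _ => ?_
          exact if_congr ⟨fun hh => ⟨h, hh⟩, And.right⟩ rfl rfl
        · exact (Finset.sum_eq_zero fun ε _ => if_neg (fun hc => h hc.1)).symm
      simp only [e1]
      exact key1 (fun δ ε => if α ≤ δ ∧ δ.1 ≤ ε.1 ∧ δ.2 ≤ ε.2
        then f (ε.1, δ.2) * g (δ.1, ε.2) else 0)
    rw [hB]
    refine Finset.sum_le_sum fun β _ => Finset.sum_le_sum fun γ _ => ?_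
    refine ite_le_ite' ?_ (fun _ => by simp) (by simpa using hfg β γ)
    rintro ⟨⟨hb, hc⟩, hp, hq⟩
    have hbg : β.2 ≤ γ.2 := (h2 α.2 β.2 γ.2 hb.2 hc.2).resolve_right hq
    exact ⟨Prod.le_def.mpr ⟨hc.1, hb.2⟩, hp, hbg⟩
  -- Case C : β1 < γ1, γ2 ≤ β2, goes to I(I2 f · I1 g)
  · have hC : (∑ δ : T1 × T2, if α ≤ δ then hI2 f δ * hI1 g δ else 0)
        = ∑ β : T1 × T2, ∑ γ : T1 × T2,
            if α ≤ (β.1, γ.2) ∧ β.1 ≤ γ.1 ∧ γ.2 ≤ β.2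
            then g (γ.1, γ.2) * f (β.1, β.2) else 0 := by
      have e1 : ∀ δ : T1 × T2, (if α ≤ δ then hI2 f δ * hI1 g δ else 0)
          = ∑ ε : T1 × T2, if α ≤ δ ∧ δ.1 ≤ ε.1 ∧ δ.2 ≤ ε.2
              then g (ε.1, δ.2) * f (δ.1, ε.2) else 0 := by
        intro δ
        rw [mul_comm, hI1, hI2, mul_expand2]
        split_ifs with h
        · refine Finset.sum_congr rfl fun ε _ => ?_
          exact if_congr ⟨fun hh => ⟨h, hh⟩, And.right⟩ rfl rfl
        · exact (Finset.sum_eq_zero fun ε _ => if_neg (fun hc => h hc.1)).symm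
      simp only [e1]
      exact key2 (fun δ ε => if α ≤ δ ∧ δ.1 ≤ ε.1 ∧ δ.2 ≤ ε.2
        then g (ε.1, δ.2) * f (δ.1, ε.2) else 0)
    rw [hC]
    refine Finset.sum_le_sum fun β _ => Finset.sum_le_sum fun γ _ => ?_
    refine ite_le_ite' ?_ (fun _ => by simp [mul_comm]) ?_
    · rintro ⟨⟨hb, hc⟩, hp, hq⟩
      have hbg : β.1 ≤ γ.1 := (h1 α.1 β.1 γ.1 hb.1 hc.1).resolve_right hp
      exact ⟨Prod.le_def.mpr ⟨hb.1, hc.2⟩, hbg, hq⟩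
    · simpa [mul_comm] using hfg β γ
  -- Case D : β < γ, goes to I(f · Ig)
  · have hD : (∑ δ : T1 × T2, if α ≤ δ then f δ * hI g δ else 0)
        = ∑ β : T1 × T2, ∑ γ : T1 × T2, if α ≤ β ∧ β ≤ γ then f β * g γ else 0 := by
      refine Finset.sum_congr rfl fun δ _ => ?_
      rw [hI, Finset.mul_sum]
      split_ifs with h
      · refine Finset.sum_congr rfl fun ε _ => ?_
        rw [mul_ite, mul_zero]
        by_cases h3 : δ ≤ ε
        · rw [if_pos h3, if_pos ⟨h, h3⟩]
        · rw [if_neg h3, if_neg fun hc => h3 hc.2]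
      · exact (Finset.sum_eq_zero fun ε _ => if_neg (fun hc => h hc.1)).symm
    rw [hD]
    refine Finset.sum_le_sum fun β _ => Finset.sum_le_sum fun γ _ => ?_
    refine ite_le_ite' ?_ (fun _ => rfl) (hfg β γ)
    rintro ⟨⟨hb, hc⟩, hp, hq⟩
    have hbg1 : β.1 ≤ γ.1 := (h1 α.1 β.1 γ.1 hb.1 hc.1).resolve_right hp
    have hbg2 : β.2 ≤ γ.2 := (h2 α.2 β.2 γ.2 hb.2 hc.2).resolve_right hq
    exact ⟨hb, Prod.le_def.mpr ⟨hbg1, hbg2⟩⟩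
end

section
/- Let $T^2$ be a bi-tree (product of two finite trees) with bi-parameter Hardy operator $\mathbb{I} = I_1 I_2$. Let $0 < \delta \leq \lambda/4$ and let $f : T^2 \to [0,\infty)$ be supported on the set $\{\mathbb{I} f \leq \delta\}$. Then pointwise $(\mathbb{I} f)\, \mathbf{1}_{\{\mathbb{I} f \geq \lambda\}} \leq 4\lambda^{-1}\, \mathbb{I}( I_1 f \cdot I_2 f )$. -/
open Finset
open scoped Classical

attribute [-instance] Prod.instDecidableLE

section Aux

variable {T1 T2 : Type*} [Fintype T1] [PartialOrder T1] [Fintype T2] [PartialOrder T2]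

private lemma ite_nonneg' (c : Prop) [Decidable c] {x : ℝ} (hx : 0 ≤ x) :
    0 ≤ if c then x else 0 := by
  split_ifs
  · exact hx
  · exact le_rfl

private lemma hI_nonneg {T : Type*} [Fintype T] [PartialOrder T] (f : T → ℝ)
    (hf : ∀ a, 0 ≤ f a) (a : T) : 0 ≤ hI f a :=
  Finset.sum_nonneg fun b _ => ite_nonneg' _ (hf b)

private noncomputable def tA (f : T1 × T2 → ℝ) (α b b' : T1 × T2) : ℝ :=
  if α ≤ ((b'.1, b.2) : T1 × T2) ∧ b'.1 ≤ b.1 ∧ b.2 ≤ b'.2 then f b * f b' else 0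

private noncomputable def tB (f : T1 × T2 → ℝ) (α b b' : T1 × T2) : ℝ :=
  if α ≤ ((b.1, b'.2) : T1 × T2) ∧ b.1 ≤ b'.1 ∧ b'.2 ≤ b.2 then f b' * f b else 0

private noncomputable def tC (f : T1 × T2 → ℝ) (α b b' : T1 × T2) : ℝ :=
  if α ≤ b' ∧ b' ≤ b then f b * f b' else 0

private noncomputable def tD (f : T1 × T2 → ℝ) (α b b' : T1 × T2) : ℝ :=
  if α ≤ b ∧ b ≤ b' then f b * f b' else 0

private noncomputable def Phi (f : T1 × T2 → ℝ) (α : T1 × T2)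
    (p : (T1 × T2) × (T1 × T2)) : ℝ :=
  if α ≤ p.1 ∧ p.1.1 ≤ p.2.1 ∧ p.1.2 ≤ p.2.2 then f (p.2.1, p.1.2) * f (p.1.1, p.2.2) else 0

private lemma sum_Phi (f : T1 × T2 → ℝ) (α : T1 × T2) :
    ∑ p : (T1 × T2) × (T1 × T2), Phi f α p = hI (fun a => hI1 f a * hI2 f a) α := by
  calc ∑ p : (T1 × T2) × (T1 × T2), Phi f α p
      = ∑ s : T1 × T2, ∑ z : T1 × T2, Phi f α (s, z) := by
        rw [Fintype.sum_prod_type]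
    _ = ∑ s : T1 × T2, ∑ x : T1, ∑ y : T2, Phi f α (s, (x, y)) :=
        Finset.sum_congr rfl fun s _ => by rw [Fintype.sum_prod_type]
    _ = hI (fun a => hI1 f a * hI2 f a) α := by
        simp only [hI]
        refine Finset.sum_congr rfl fun s _ => ?_
        by_cases hs : α ≤ s
        · rw [if_pos hs]
          simp only [hI1, hI2]
          rw [Finset.sum_mul_sum]
          refine Finset.sum_congr rfl fun x _ => Finset.sum_congr rfl fun y _ => ?_
          simp only [Phi, hs, true_and]
          by_cases hx : s.1 ≤ x <;> by_cases hy : s.2 ≤ y <;> simp [hx, hy]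
        · rw [if_neg hs]
          refine Finset.sum_eq_zero fun x _ => Finset.sum_eq_zero fun y _ => ?_
          simp [Phi, hs]

private lemma sum_tA (f : T1 × T2 → ℝ) (α : T1 × T2) :
    ∑ b : T1 × T2, ∑ b' : T1 × T2, tA f α b b'
      = hI (fun a => hI1 f a * hI2 f a) α := by
  rw [← sum_Phi f α]
  calc ∑ b : T1 × T2, ∑ b' : T1 × T2, tA f α b b'
      = ∑ p : (T1 × T2) × (T1 × T2), tA f α p.1 p.2 :=
        (Fintype.sum_prod_type (f := fun p : (T1 × T2) × (T1 × T2) => tA f α p.1 p.2)).symm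
    _ = ∑ p : (T1 × T2) × (T1 × T2), Phi f α p := by
        refine Fintype.sum_equiv
          ⟨fun p => ((p.2.1, p.1.2), (p.1.1, p.2.2)),
           fun p => ((p.2.1, p.1.2), (p.1.1, p.2.2)),
           fun p => by rcases p with ⟨⟨_, _⟩, ⟨_, _⟩⟩; rfl,
           fun p => by rcases p with ⟨⟨_, _⟩, ⟨_, _⟩⟩; rfl⟩
          (fun p => tA f α p.1 p.2) (Phi f α) ?_
        rintro ⟨⟨x, y⟩, ⟨x', y'⟩⟩
        simp only [Equiv.coe_fn_mk, tA, Phi]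

private lemma sum_tB (f : T1 × T2 → ℝ) (α : T1 × T2) :
    ∑ b : T1 × T2, ∑ b' : T1 × T2, tB f α b b'
      = hI (fun a => hI1 f a * hI2 f a) α := by
  rw [← sum_Phi f α]
  calc ∑ b : T1 × T2, ∑ b' : T1 × T2, tB f α b b'
      = ∑ p : (T1 × T2) × (T1 × T2), tB f α p.1 p.2 :=
        (Fintype.sum_prod_type (f := fun p : (T1 × T2) × (T1 × T2) => tB f α p.1 p.2)).symm
    _ = ∑ p : (T1 × T2) × (T1 × T2), Phi f α p := by
        refine Fintype.sum_equiv
          ⟨fun p => ((p.1.1, p.2.2), (p.2.1, p.1.2)),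
           fun p => ((p.1.1, p.2.2), (p.2.1, p.1.2)),
           fun p => by rcases p with ⟨⟨_, _⟩, ⟨_, _⟩⟩; rfl,
           fun p => by rcases p with ⟨⟨_, _⟩, ⟨_, _⟩⟩; rfl⟩
          (fun p => tB f α p.1 p.2) (Phi f α) ?_
        rintro ⟨⟨x, y⟩, ⟨x', y'⟩⟩
        simp only [Equiv.coe_fn_mk, tB, Phi]

private lemma sum_tC (f : T1 × T2 → ℝ) (hf : ∀ a, 0 ≤ f a) (δ : ℝ)
    (hsupp : ∀ a, f a ≠ 0 → hI f a ≤ δ) (α : T1 × T2) :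
    ∑ b : T1 × T2, ∑ b' : T1 × T2, tC f α b b' ≤ δ * hI f α := by
  rw [Finset.sum_comm]
  have hstep : ∀ b' : T1 × T2,
      (∑ b : T1 × T2, tC f α b b') ≤ if α ≤ b' then δ * f b' else 0 := by
    intro b'
    by_cases hb' : α ≤ b'
    · rw [if_pos hb']
      have heq : (∑ b : T1 × T2, tC f α b b') = hI f b' * f b' := by
        rw [hI, Finset.sum_mul]
        refine Finset.sum_congr rfl fun b _ => ?_
        simp only [tC, hb', true_and, ite_mul, zero_mul]
      rw [heq]
      by_cases hz : f b' = 0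
      · simp [hz]
      · exact mul_le_mul_of_nonneg_right (hsupp b' hz) (hf b')
    · rw [if_neg hb']
      refine le_of_eq (Finset.sum_eq_zero fun b _ => ?_)
      simp [tC, hb']
  calc ∑ b' : T1 × T2, ∑ b : T1 × T2, tC f α b b'
      ≤ ∑ b' : T1 × T2, if α ≤ b' then δ * f b' else 0 :=
        Finset.sum_le_sum fun b' _ => hstep b'
    _ = δ * hI f α := by
        rw [hI, Finset.mul_sum]
        exact Finset.sum_congr rfl fun b' _ => by rw [mul_ite, mul_zero]

private lemma sum_tD (f : T1 × T2 → ℝ) (hf : ∀ a, 0 ≤ f a) (δ : ℝ)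
    (hsupp : ∀ a, f a ≠ 0 → hI f a ≤ δ) (α : T1 × T2) :
    ∑ b : T1 × T2, ∑ b' : T1 × T2, tD f α b b' ≤ δ * hI f α := by
  have hstep : ∀ b : T1 × T2,
      (∑ b' : T1 × T2, tD f α b b') ≤ if α ≤ b then δ * f b else 0 := by
    intro b
    by_cases hb : α ≤ b
    · rw [if_pos hb]
      have heq : (∑ b' : T1 × T2, tD f α b b') = f b * hI f b := by
        rw [hI, Finset.mul_sum]
        refine Finset.sum_congr rfl fun b' _ => ?_
        simp only [tD, hb, true_and, mul_ite, mul_zero]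
      rw [heq]
      by_cases hz : f b = 0
      · simp [hz]
      · calc f b * hI f b = hI f b * f b := mul_comm _ _
          _ ≤ δ * f b := mul_le_mul_of_nonneg_right (hsupp b hz) (hf b)
    · rw [if_neg hb]
      refine le_of_eq (Finset.sum_eq_zero fun b' _ => ?_)
      simp [tD, hb]
  calc ∑ b : T1 × T2, ∑ b' : T1 × T2, tD f α b b'
      ≤ ∑ b : T1 × T2, if α ≤ b then δ * f b else 0 :=
        Finset.sum_le_sum fun b _ => hstep b
    _ = δ * hI f α := by
        rw [hI, Finset.mul_sum]
        exact Finset.sum_congr rfl fun b _ => by rw [mul_ite, mul_zero]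

private lemma pointwise_bound (h1 : IsTreeOrder T1) (h2 : IsTreeOrder T2)
    (f : T1 × T2 → ℝ) (hf : ∀ a, 0 ≤ f a) (α b b' : T1 × T2) :
    (if α ≤ b then f b else 0) * (if α ≤ b' then f b' else 0) ≤
      tA f α b b' + tB f α b b' + tC f α b b' + tD f α b b' := by
  have hm : 0 ≤ f b * f b' := mul_nonneg (hf b) (hf b')
  have hm' : 0 ≤ f b' * f b := mul_nonneg (hf b') (hf b)
  have hAnn : 0 ≤ tA f α b b' := ite_nonneg' _ hm
  have hBnn : 0 ≤ tB f α b b' := ite_nonneg' _ hm'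
  have hCnn : 0 ≤ tC f α b b' := ite_nonneg' _ hm
  have hDnn : 0 ≤ tD f α b b' := ite_nonneg' _ hm
  by_cases hb : α ≤ b
  · by_cases hb' : α ≤ b'
    · rw [if_pos hb, if_pos hb']
      have hb1 := (Prod.le_def.mp hb).1
      have hb2 := (Prod.le_def.mp hb).2
      have hb'1 := (Prod.le_def.mp hb').1
      have hb'2 := (Prod.le_def.mp hb').2
      rcases h1 α.1 b.1 b'.1 hb1 hb'1 with hx | hx <;>
        rcases h2 α.2 b.2 b'.2 hb2 hb'2 with hy | hy
      · -- b.1 ≤ b'.1, b.2 ≤ b'.2 : b ≤ b', tD fires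
        have hD : tD f α b b' = f b * f b' :=
          if_pos ⟨hb, Prod.le_def.mpr ⟨hx, hy⟩⟩
        linarith only [hAnn, hBnn, hCnn, hD]
      · -- b.1 ≤ b'.1, b'.2 ≤ b.2 : tB fires
        have hB : tB f α b b' = f b' * f b :=
          if_pos ⟨Prod.le_def.mpr ⟨hb1, hb'2⟩, hx, hy⟩
        have hcomm := mul_comm (f b) (f b')
        linarith only [hAnn, hCnn, hDnn, hB, hcomm]
      · -- b'.1 ≤ b.1, b.2 ≤ b'.2 : tA fires
        have hA : tA f α b b' = f b * f b' :=
          if_pos ⟨Prod.le_def.mpr ⟨hb'1, hb2⟩, hx, hy⟩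
        linarith only [hBnn, hCnn, hDnn, hA]
      · -- b'.1 ≤ b.1, b'.2 ≤ b.2 : b' ≤ b, tC fires
        have hC : tC f α b b' = f b * f b' :=
          if_pos ⟨hb', Prod.le_def.mpr ⟨hx, hy⟩⟩
        linarith only [hAnn, hBnn, hDnn, hC]
    · rw [if_neg hb', mul_zero]
      linarith only [hAnn, hBnn, hCnn, hDnn]
  · rw [if_neg hb, zero_mul]
    linarith only [hAnn, hBnn, hCnn, hDnn]

end Aux

theorem stmt5 {T1 T2 : Type*} [Fintype T1] [PartialOrder T1] [Fintype T2] [PartialOrder T2]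
    (h1 : IsTreeOrder T1) (h2 : IsTreeOrder T2)
    (δ lam : ℝ) (hδ : 0 < δ) (hδlam : δ ≤ lam / 4)
    (f : T1 × T2 → ℝ) (hf : ∀ a, 0 ≤ f a)
    (hsupp : ∀ a, f a ≠ 0 → hI f a ≤ δ) (α : T1 × T2) :
    (if lam ≤ hI f α then hI f α else 0) ≤
      4 / lam * hI (fun a => hI1 f a * hI2 f a) α := by
  have hlam : 0 < lam := by linarith
  set F := hI f α with hF
  set S := hI (fun a => hI1 f a * hI2 f a) α with hS
  have hFnn : 0 ≤ F := hI_nonneg f hf α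
  have hSnn : 0 ≤ S := by
    rw [hS, hI]
    refine Finset.sum_nonneg fun b _ => ite_nonneg' _ ?_
    exact mul_nonneg
      (Finset.sum_nonneg fun c _ => ite_nonneg' _ (hf _))
      (Finset.sum_nonneg fun c _ => ite_nonneg' _ (hf _))
  by_cases hcase : lam ≤ F
  · rw [if_pos hcase]
    -- key inequality : F * F ≤ 2 * S + 2 * δ * F
    have hkey : F * F ≤ 2 * S + 2 * δ * F := by
      have expand : F * F = ∑ b : T1 × T2, ∑ b' : T1 × T2,
          (if α ≤ b then f b else 0) * (if α ≤ b' then f b' else 0) := by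
        rw [hF]; simp only [hI]; rw [Finset.sum_mul_sum]
      have step1 : F * F ≤ ∑ b : T1 × T2, ∑ b' : T1 × T2,
          (tA f α b b' + tB f α b b' + tC f α b b' + tD f α b b') := by
        rw [expand]
        exact Finset.sum_le_sum fun b _ => Finset.sum_le_sum fun b' _ =>
          pointwise_bound h1 h2 f hf α b b'
      have split : ∑ b : T1 × T2, ∑ b' : T1 × T2,
          (tA f α b b' + tB f α b b' + tC f α b b' + tD f α b b')
          = (∑ b : T1 × T2, ∑ b' : T1 × T2, tA f α b b')
            + (∑ b : T1 × T2, ∑ b' : T1 × T2, tB f α b b')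
            + (∑ b : T1 × T2, ∑ b' : T1 × T2, tC f α b b')
            + (∑ b : T1 × T2, ∑ b' : T1 × T2, tD f α b b') := by
        simp only [Finset.sum_add_distrib]
      have hA := sum_tA f α
      have hB := sum_tB f α
      have hC := sum_tC f hf δ hsupp α
      have hD := sum_tD f hf δ hsupp α
      rw [split, hA, hB] at step1
      rw [← hS, ← hF] at *
      linarith
    rw [div_mul_eq_mul_div, le_div_iff₀ hlam]
    have h1' : lam * F ≤ F * F := mul_le_mul_of_nonneg_right hcase hFnn
    have h2' : 2 * δ * F ≤ lam / 2 * F := by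
      have : 2 * δ ≤ lam / 2 := by linarith
      exact mul_le_mul_of_nonneg_right this hFnn
    nlinarith [hkey, h1', h2']
  · rw [if_neg hcase]
    have : 0 ≤ 4 / lam := by positivity
    exact mul_nonneg this hSnn
end

section
/- Let $T^3 = T_1 \times T_2 \times T_3$ be a product of three finite trees and $\mathbf{I} = I_1 I_2 I_3$ the tri-parameter Hardy operator. Then for any nonnegative $f, g : T^3 \to [0,\infty)$, pointwise $(\mathbf{I} f)(\mathbf{I} g) \leq \mathbf{I}\Big( \sum_{A \subseteq \{1,2,3\}} I_A f \cdot I_{A^c} g \Big)$, where $I_A = \prod_{i \in A} I_i$ (with $I_\emptyset$ the identity). -/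
open Finset
open scoped Classical

set_option linter.unusedSectionVars false

/-- The Hardy operator acting in the first coordinate of a tri-tree. -/
noncomputable def k1 {T1 T2 T3 : Type*} [Fintype T1] [PartialOrder T1]
    (f : T1 × T2 × T3 → ℝ) (a : T1 × T2 × T3) : ℝ :=
  ∑ b : T1, if a.1 ≤ b then f (b, a.2.1, a.2.2) else 0

/-- The Hardy operator acting in the second coordinate of a tri-tree. -/
noncomputable def k2 {T1 T2 T3 : Type*} [Fintype T2] [PartialOrder T2]
    (f : T1 × T2 × T3 → ℝ) (a : T1 × T2 × T3) : ℝ :=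
  ∑ b : T2, if a.2.1 ≤ b then f (a.1, b, a.2.2) else 0

/-- The Hardy operator acting in the third coordinate of a tri-tree. -/
noncomputable def k3 {T1 T2 T3 : Type*} [Fintype T3] [PartialOrder T3]
    (f : T1 × T2 × T3 → ℝ) (a : T1 × T2 × T3) : ℝ :=
  ∑ b : T3, if a.2.2 ≤ b then f (a.1, a.2.1, b) else 0

/-- Superadditivity in the first parameter separately. -/
def SuperaddT1 {T1 T2 T3 : Type*} [Fintype T1] [PartialOrder T1]
    (f : T1 × T2 × T3 → ℝ) : Prop :=
  ∀ (β : T1) (a2 : T2) (a3 : T3),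
    (∑ b, if IsChild b β then f (b, a2, a3) else 0) ≤ f (β, a2, a3)

/-- Superadditivity in the second parameter separately. -/
def SuperaddT2 {T1 T2 T3 : Type*} [Fintype T2] [PartialOrder T2]
    (f : T1 × T2 × T3 → ℝ) : Prop :=
  ∀ (a1 : T1) (β : T2) (a3 : T3),
    (∑ b, if IsChild b β then f (a1, b, a3) else 0) ≤ f (a1, β, a3)

/-- Superadditivity in the third parameter separately. -/
def SuperaddT3 {T1 T2 T3 : Type*} [Fintype T3] [PartialOrder T3]
    (f : T1 × T2 × T3 → ℝ) : Prop :=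
  ∀ (a1 : T1) (a2 : T2) (β : T3),
    (∑ b, if IsChild b β then f (a1, a2, b) else 0) ≤ f (a1, a2, β)

section Aux

private lemma ite_sum_zero {p : Prop} [Decidable p] {γ : Type*} (s : Finset γ) (h : γ → ℝ) :
    (if p then ∑ x ∈ s, h x else 0) = ∑ x ∈ s, if p then h x else 0 := by
  split <;> simp

private lemma ite2_nonneg {p q : Prop} [Decidable p] [Decidable q] {x : ℝ} (hx : 0 ≤ x) :
    (0:ℝ) ≤ if p then (if q then x else 0) else 0 := by
  split_ifs <;> simp [hx]

private lemma hardy_key {T : Type*} [Fintype T] [PartialOrder T] (ht : IsTreeOrder T)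
    (u v : T → ℝ) (hu : ∀ t, 0 ≤ u t) (hv : ∀ t, 0 ≤ v t) (α : T) :
    hI u α * hI v α ≤ hI (fun x => u x * hI v x + hI u x * v x) α := by
  have huv : ∀ b c : T, (0:ℝ) ≤ u b * v c := fun b c => mul_nonneg (hu b) (hv c)
  calc hI u α * hI v α
      = ∑ b, ∑ c, (if α ≤ b then u b else 0) * (if α ≤ c then v c else 0) := by
        simp only [hI]; rw [Finset.sum_mul_sum]
    _ ≤ ∑ b, ∑ c, ((if α ≤ b then (if b ≤ c then u b * v c else 0) else 0)
          + (if α ≤ c then (if c ≤ b then u b * v c else 0) else 0)) := by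
        refine Finset.sum_le_sum fun b _ => Finset.sum_le_sum fun c _ => ?_
        by_cases hb : α ≤ b
        · by_cases hc : α ≤ c
          · rw [if_pos hb, if_pos hc]
            rcases ht α b c hb hc with h | h
            · rw [if_pos hb, if_pos h]
              exact le_add_of_nonneg_right (ite2_nonneg (huv b c))
            · rw [if_pos hc, if_pos h]
              exact le_add_of_nonneg_left (ite2_nonneg (huv b c))
          · rw [if_neg hc, mul_zero]
            exact add_nonneg (ite2_nonneg (huv b c)) (ite2_nonneg (huv b c))
        · rw [if_neg hb, zero_mul]
          exact add_nonneg (ite2_nonneg (huv b c)) (ite2_nonneg (huv b c))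
    _ = (∑ b, ∑ c, (if α ≤ b then (if b ≤ c then u b * v c else 0) else 0))
        + (∑ b, ∑ c, (if α ≤ c then (if c ≤ b then u b * v c else 0) else 0)) := by
        rw [← Finset.sum_add_distrib]
        exact Finset.sum_congr rfl fun b _ => by rw [← Finset.sum_add_distrib]
    _ = (∑ b, if α ≤ b then u b * hI v b else 0)
        + (∑ c, if α ≤ c then hI u c * v c else 0) := by
        congr 1
        · refine Finset.sum_congr rfl fun b _ => ?_
          simp only [hI]
          split_ifs with h
          · rw [Finset.mul_sum]
            exact Finset.sum_congr rfl fun c _ => by split_ifs <;> simp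
          · simp
        · rw [Finset.sum_comm]
          refine Finset.sum_congr rfl fun c _ => ?_
          simp only [hI]
          split_ifs with h
          · rw [Finset.sum_mul]
            exact Finset.sum_congr rfl fun b _ => by split_ifs <;> simp
          · simp
    _ = hI (fun x => u x * hI v x + hI u x * v x) α := by
        simp only [hI, ← Finset.sum_add_distrib]
        exact Finset.sum_congr rfl fun x _ => by split_ifs <;> simp

variable {T1 T2 T3 : Type*} [Fintype T1] [PartialOrder T1] [Fintype T2] [PartialOrder T2]
    [Fintype T3] [PartialOrder T3]

private lemma k1_nonneg {u : T1 × T2 × T3 → ℝ} (hu : ∀ x, 0 ≤ u x) : ∀ a, 0 ≤ k1 u a :=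
  fun _ => Finset.sum_nonneg fun b _ => by split_ifs <;> [exact hu _; exact le_rfl]

private lemma k2_nonneg {u : T1 × T2 × T3 → ℝ} (hu : ∀ x, 0 ≤ u x) : ∀ a, 0 ≤ k2 u a :=
  fun _ => Finset.sum_nonneg fun b _ => by split_ifs <;> [exact hu _; exact le_rfl]

private lemma k3_nonneg {u : T1 × T2 × T3 → ℝ} (hu : ∀ x, 0 ≤ u x) : ∀ a, 0 ≤ k3 u a :=
  fun _ => Finset.sum_nonneg fun b _ => by split_ifs <;> [exact hu _; exact le_rfl]

private lemma k1_mono {u v : T1 × T2 × T3 → ℝ} (h : ∀ x, u x ≤ v x) (a : T1 × T2 × T3) :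
    k1 u a ≤ k1 v a :=
  Finset.sum_le_sum fun b _ => by split_ifs <;> [exact h _; exact le_rfl]

private lemma k2_mono {u v : T1 × T2 × T3 → ℝ} (h : ∀ x, u x ≤ v x) (a : T1 × T2 × T3) :
    k2 u a ≤ k2 v a :=
  Finset.sum_le_sum fun b _ => by split_ifs <;> [exact h _; exact le_rfl]

private lemma k2_add (u v : T1 × T2 × T3 → ℝ) (a : T1 × T2 × T3) :
    k2 (fun x => u x + v x) a = k2 u a + k2 v a := by
  simp only [k2, ← Finset.sum_add_distrib]
  exact Finset.sum_congr rfl fun b _ => by split_ifs <;> simp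

private lemma k3_add (u v : T1 × T2 × T3 → ℝ) (a : T1 × T2 × T3) :
    k3 (fun x => u x + v x) a = k3 u a + k3 v a := by
  simp only [k3, ← Finset.sum_add_distrib]
  exact Finset.sum_congr rfl fun b _ => by split_ifs <;> simp

private lemma k1_k2' (u : T1 × T2 × T3 → ℝ) : k1 (k2 u) = k2 (k1 u) := by
  funext a
  simp only [k1, k2, _root_.ite_sum_zero]
  rw [Finset.sum_comm]
  exact Finset.sum_congr rfl fun c _ => Finset.sum_congr rfl fun b _ => by split_ifs <;> rfl

private lemma k1_k3' (u : T1 × T2 × T3 → ℝ) : k1 (k3 u) = k3 (k1 u) := by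
  funext a
  simp only [k1, k3, _root_.ite_sum_zero]
  rw [Finset.sum_comm]
  exact Finset.sum_congr rfl fun c _ => Finset.sum_congr rfl fun b _ => by split_ifs <;> rfl

private lemma k2_k3' (u : T1 × T2 × T3 → ℝ) : k2 (k3 u) = k3 (k2 u) := by
  funext a
  simp only [k2, k3, _root_.ite_sum_zero]
  rw [Finset.sum_comm]
  exact Finset.sum_congr rfl fun c _ => Finset.sum_congr rfl fun b _ => by split_ifs <;> rfl

private lemma hI_eq' (h : T1 × T2 × T3 → ℝ) : hI h = k1 (k2 (k3 h)) := by
  funext a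
  simp only [hI, k1, k2, k3, Fintype.sum_prod_type, Prod.le_def, ite_and, _root_.ite_sum_zero]

private lemma k1_key (ht : IsTreeOrder T1) (u v : T1 × T2 × T3 → ℝ)
    (hu : ∀ x, 0 ≤ u x) (hv : ∀ x, 0 ≤ v x) (a : T1 × T2 × T3) :
    k1 u a * k1 v a ≤ k1 (fun x => u x * k1 v x + k1 u x * v x) a :=
  hardy_key ht (fun t => u (t, a.2.1, a.2.2)) (fun t => v (t, a.2.1, a.2.2))
    (fun _ => hu _) (fun _ => hv _) a.1

private lemma k2_key (ht : IsTreeOrder T2) (u v : T1 × T2 × T3 → ℝ)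
    (hu : ∀ x, 0 ≤ u x) (hv : ∀ x, 0 ≤ v x) (a : T1 × T2 × T3) :
    k2 u a * k2 v a ≤ k2 (fun x => u x * k2 v x + k2 u x * v x) a :=
  hardy_key ht (fun t => u (a.1, t, a.2.2)) (fun t => v (a.1, t, a.2.2))
    (fun _ => hu _) (fun _ => hv _) a.2.1

private lemma k3_key (ht : IsTreeOrder T3) (u v : T1 × T2 × T3 → ℝ)
    (hu : ∀ x, 0 ≤ u x) (hv : ∀ x, 0 ≤ v x) (a : T1 × T2 × T3) :
    k3 u a * k3 v a ≤ k3 (fun x => u x * k3 v x + k3 u x * v x) a :=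
  hardy_key ht (fun t => u (a.1, a.2.1, t)) (fun t => v (a.1, a.2.1, t))
    (fun _ => hu _) (fun _ => hv _) a.2.2

end Aux

theorem stmt6 {T1 T2 T3 : Type*} [Fintype T1] [PartialOrder T1] [Fintype T2] [PartialOrder T2]
    [Fintype T3] [PartialOrder T3]
    (h1 : IsTreeOrder T1) (h2 : IsTreeOrder T2) (h3 : IsTreeOrder T3)
    (f g : T1 × T2 × T3 → ℝ) (hf : ∀ a, 0 ≤ f a) (hg : ∀ a, 0 ≤ g a)
    (α : T1 × T2 × T3) :
    hI f α * hI g α ≤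
      hI (fun a =>
        f a * hI g a
        + k1 f a * k2 (k3 g) a + k2 f a * k1 (k3 g) a + k3 f a * k1 (k2 g) a
        + k1 (k2 f) a * k3 g a + k1 (k3 f) a * k2 g a + k2 (k3 f) a * k1 g a
        + hI f a * g a) α := by
  have hΦeq := hI_eq' (fun a =>
        f a * hI g a
        + k1 f a * k2 (k3 g) a + k2 f a * k1 (k3 g) a + k3 f a * k1 (k2 g) a
        + k1 (k2 f) a * k3 g a + k1 (k3 f) a * k2 g a + k2 (k3 f) a * k1 g a
        + hI f a * g a)
  rw [hΦeq, hI_eq' f, hI_eq' g]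
  refine le_trans (k1_key h1 (k2 (k3 f)) (k2 (k3 g))
      (k2_nonneg (k3_nonneg hf)) (k2_nonneg (k3_nonneg hg)) α)
    (k1_mono (fun a => ?_) α)
  rw [k1_k2' (k3 g), k1_k2' (k3 f)]
  refine le_trans (add_le_add
      (k2_key h2 (k3 f) (k1 (k3 g)) (k3_nonneg hf) (k1_nonneg (k3_nonneg hg)) a)
      (k2_key h2 (k1 (k3 f)) (k3 g) (k1_nonneg (k3_nonneg hf)) (k3_nonneg hg) a)) ?_
  rw [← k2_add]
  refine k2_mono (fun x => ?_) a
  rw [k1_k3' g, k1_k3' f, k2_k3' f, k2_k3' g, k2_k3' (k1 g), k2_k3' (k1 f)]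
  refine le_trans (add_le_add
      (add_le_add (k3_key h3 f (k2 (k1 g)) hf (k2_nonneg (k1_nonneg hg)) x)
                  (k3_key h3 (k2 f) (k1 g) (k2_nonneg hf) (k1_nonneg hg) x))
      (add_le_add (k3_key h3 (k1 f) (k2 g) (k1_nonneg hf) (k2_nonneg hg) x)
                  (k3_key h3 (k2 (k1 f)) g (k2_nonneg (k1_nonneg hf)) hg x))) ?_
  rw [← k3_add, ← k3_add, ← k3_add]
  refine le_of_eq ?_
  congr 1
  funext y
  simp only [hI_eq', k1_k2', k1_k3', k2_k3']
  ring
end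

section
/- Let $T$ be a finite tree and $g, h : T \to [0,\infty)$ with $g$ superadditive. Let $\lambda = \sup_{\alpha \in \operatorname{supp} g} Ih(\alpha)$ (sup over the support of $g$ of $Ih$). Then for every $\beta \in T$, $\sum_{\alpha \leq \beta} g(\alpha) h(\alpha) \leq \lambda\, g(\beta)$. -/
open Finset
open scoped Classical

theorem stmt8 {T : Type*} [Fintype T] [PartialOrder T] (htree : IsTreeOrder T)
    (g h : T → ℝ) (hg0 : ∀ a, 0 ≤ g a) (hh0 : ∀ a, 0 ≤ h a)
    (hsup : Superadd g) (lam : ℝ) (hlam0 : 0 ≤ lam)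
    (hlam : ∀ a, g a ≠ 0 → hI h a ≤ lam) (β : T) :
    (∑ a, if a ≤ β then g a * h a else 0) ≤ lam * g β := by
  classical
  set D : T → ℝ := fun α => g α - ∑ b, if IsChild b α then g b else 0 with hD
  set J : T → ℝ := fun α => ∑ γ, if α ≤ γ ∧ γ ≤ β then h γ else 0 with hJ
  have hDdef : ∀ α, D α = g α - ∑ b, if IsChild b α then g b else 0 := fun α => by rw [hD]
  have hch0 : ∀ α : T, 0 ≤ ∑ b, if IsChild b α then g b else 0 := by
    intro α
    refine Finset.sum_nonneg fun b _ => ?_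
    split_ifs
    · exact hg0 b
    · exact le_rfl
  have hD0 : ∀ α, 0 ≤ D α := fun α => by rw [hDdef]; exact sub_nonneg.2 (hsup α)
  have hDle : ∀ α, D α ≤ g α := fun α => by rw [hDdef]; exact sub_le_self _ (hch0 α)
  have hJle : ∀ α, J α ≤ hI h α := by
    intro α
    rw [hJ, hI]
    refine Finset.sum_le_sum fun γ _ => ?_
    by_cases h1 : α ≤ γ ∧ γ ≤ β
    · rw [if_pos h1, if_pos h1.1]
    · rw [if_neg h1]
      split_ifs
      · exact hh0 γ
      · exact le_rfl
  have hsplit : ∀ f : T → ℝ,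
      (∑ α, if α ≤ β then f α else 0) = f β + ∑ α, if α < β then f α else 0 := by
    intro f
    have hpt : ∀ α : T, (if α ≤ β then f α else 0)
        = (if α = β then f α else 0) + (if α < β then f α else 0) := by
      intro α
      by_cases h1 : α = β
      · subst h1; simp [lt_irrefl]
      · by_cases h2 : α < β
        · rw [if_pos h2.le, if_neg h1, if_pos h2]; ring
        · have h3 : ¬ α ≤ β := fun hle => h2 (lt_of_le_of_ne hle h1)
          simp [h3, h1, h2]
    rw [Finset.sum_congr rfl fun α _ => hpt α, Finset.sum_add_distrib,
      Finset.sum_ite_eq' Finset.univ β f]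
    simp
  have hpar : ∀ b : T, b < β → ∃ p, p ≤ β ∧ IsChild b p ∧
      (∀ q, q ≤ β → IsChild b q → q = p) ∧ J p = J b - h b := by
    intro b hb
    have hne : (Finset.univ.filter (fun γ : T => b < γ ∧ γ ≤ β)).Nonempty :=
      ⟨β, by simp [hb]⟩
    obtain ⟨p, hpmem, hpmin0⟩ := Finset.exists_minimal hne
    have hpmin : ∀ x ∈ Finset.univ.filter (fun γ : T => b < γ ∧ γ ≤ β), ¬ x < p :=
      fun x hx hlt => hlt.not_ge (hpmin0 hx hlt.le)
    simp only [Finset.mem_filter, Finset.mem_univ, true_and] at hpmem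
    have hmin : ∀ γ, b < γ → γ ≤ β → p ≤ γ := by
      intro γ h1 h2
      rcases htree b p γ hpmem.1.le h1.le with h3 | h3
      · exact h3
      · rcases eq_or_lt_of_le h3 with h4 | h4
        · exact h4.ge
        · exact absurd h4 (hpmin γ (by simp [h1, h2]))
    have hchild : IsChild b p :=
      ⟨hpmem.1, fun c hc1 hc2 =>
        absurd (hmin c hc1 (hc2.le.trans hpmem.2)) hc2.not_ge⟩
    have huniq : ∀ q, q ≤ β → IsChild b q → q = p := by
      intro q hqβ hqc
      rcases eq_or_lt_of_le (hmin q hqc.1 hqβ) with h4 | h4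
      · exact h4.symm
      · exact (hqc.2 p hpmem.1 h4).elim
    refine ⟨p, hpmem.2, hchild, huniq, ?_⟩
    have hsub : J b - J p = h b := by
      rw [hJ]
      rw [← Finset.sum_sub_distrib]
      have hpt : ∀ γ : T,
          ((if b ≤ γ ∧ γ ≤ β then h γ else 0) - (if p ≤ γ ∧ γ ≤ β then h γ else 0))
            = (if γ = b then h γ else 0) := by
        intro γ
        by_cases h1 : γ = b
        · subst h1
          rw [if_pos ⟨le_refl _, hb.le⟩, if_neg (fun hc => absurd hc.1 hpmem.1.not_ge),
            if_pos rfl]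
          ring
        · have hiff : (b ≤ γ ∧ γ ≤ β) ↔ (p ≤ γ ∧ γ ≤ β) := by
            constructor
            · rintro ⟨ha, hb2⟩
              exact ⟨hmin γ (lt_of_le_of_ne ha (Ne.symm h1)) hb2, hb2⟩
            · rintro ⟨ha, hb2⟩
              exact ⟨hpmem.1.le.trans ha, hb2⟩
          by_cases h2 : b ≤ γ ∧ γ ≤ β
          · rw [if_pos h2, if_pos (hiff.1 h2), if_neg h1]; ring
          · rw [if_neg h2, if_neg (fun hx => h2 (hiff.2 hx)), if_neg h1]; ring
      rw [Finset.sum_congr rfl fun γ _ => hpt γ, Finset.sum_ite_eq' Finset.univ b h]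
      simp
    linarith
  have hswap : ∀ F F' : T → ℝ, (∀ b p, b < β → p ≤ β → IsChild b p → F p = F' b) →
      (∑ α, if α ≤ β then F α * (∑ b, if IsChild b α then g b else 0) else 0)
        = ∑ b, if b < β then F' b * g b else 0 := by
    intro F F' hFF'
    have step1 : ∀ α : T, (if α ≤ β then F α * (∑ b, if IsChild b α then g b else 0) else 0)
        = ∑ b, if α ≤ β ∧ IsChild b α then F α * g b else 0 := by
      intro α
      by_cases hα : α ≤ β
      · rw [if_pos hα, Finset.mul_sum]
        refine Finset.sum_congr rfl fun b _ => ?_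
        by_cases hb : IsChild b α <;> simp [hb, hα]
      · rw [if_neg hα]
        refine (Finset.sum_eq_zero fun b _ => ?_).symm
        exact if_neg fun hc => hα hc.1
    rw [Finset.sum_congr rfl fun α _ => step1 α, Finset.sum_comm]
    refine Finset.sum_congr rfl fun b _ => ?_
    by_cases hb : b < β
    · obtain ⟨p, hpβ, hpc, hpu, _⟩ := hpar b hb
      rw [if_pos hb]
      rw [Finset.sum_eq_single_of_mem p (Finset.mem_univ p)]
      · rw [if_pos ⟨hpβ, hpc⟩, hFF' b p hb hpβ hpc]
      · intro x _ hx
        by_cases hc : x ≤ β ∧ IsChild b x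
        · exact absurd (hpu x hc.1 hc.2) hx
        · exact if_neg hc
    · rw [if_neg hb]
      refine Finset.sum_eq_zero fun α _ => ?_
      exact if_neg fun hc => hb (lt_of_lt_of_le hc.2.1 hc.1)
  have hJβ : J β = h β := by
    show (∑ γ : T, if β ≤ γ ∧ γ ≤ β then h γ else 0) = h β
    have hpt : ∀ γ : T, (if β ≤ γ ∧ γ ≤ β then h γ else 0) = if γ = β then h γ else 0 := by
      intro γ
      by_cases h1 : γ = β
      · subst h1; simp
      · rw [if_neg (fun hc => h1 (le_antisymm hc.2 hc.1)), if_neg h1]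
    rw [Finset.sum_congr rfl fun γ _ => hpt γ, Finset.sum_ite_eq' Finset.univ β h]
    simp
  have hA : (∑ α, if α ≤ β then D α else 0) = g β := by
    have h1 : (∑ α, if α ≤ β then D α else 0)
        = (∑ α, if α ≤ β then g α else 0)
          - (∑ α, if α ≤ β then (1 : ℝ) * (∑ b, if IsChild b α then g b else 0) else 0) := by
      rw [← Finset.sum_sub_distrib]
      refine Finset.sum_congr rfl fun α _ => ?_
      by_cases hα : α ≤ β
      · rw [if_pos hα, if_pos hα, if_pos hα, hDdef]; ring
      · simp [hα]
    rw [h1, hswap (fun _ => 1) (fun _ => 1) (fun _ _ _ _ _ => rfl), hsplit g]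
    have h2 : (∑ b, if b < β then (1 : ℝ) * g b else 0) = ∑ b, if b < β then g b else 0 :=
      Finset.sum_congr rfl fun b _ => by split_ifs <;> ring
    rw [h2]; ring
  have hB : (∑ α, if α ≤ β then J α * D α else 0) = ∑ a, if a ≤ β then g a * h a else 0 := by
    have h1 : (∑ α, if α ≤ β then J α * D α else 0)
        = (∑ α, if α ≤ β then J α * g α else 0)
          - (∑ α, if α ≤ β then J α * (∑ b, if IsChild b α then g b else 0) else 0) := by
      rw [← Finset.sum_sub_distrib]
      refine Finset.sum_congr rfl fun α _ => ?_
      by_cases hα : α ≤ β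
      · rw [if_pos hα, if_pos hα, if_pos hα, hDdef]; ring
      · simp [hα]
    have h2 := hswap J (fun b => J b - h b) (fun b p hb hpβ hpc => by
      obtain ⟨p', hp'β, hp'c, hp'u, hp'J⟩ := hpar b hb
      rwa [hp'u p hpβ hpc])
    rw [h1, h2, hsplit (fun α => J α * g α), hsplit (fun a => g a * h a), hJβ]
    have h4 : (∑ b, if b < β then J b * g b else 0)
        - (∑ b, if b < β then (J b - h b) * g b else 0)
          = ∑ b, if b < β then g b * h b else 0 := by
      rw [← Finset.sum_sub_distrib]
      exact Finset.sum_congr rfl fun b _ => by split_ifs <;> ring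
    linarith
  calc (∑ a, if a ≤ β then g a * h a else 0)
      = ∑ α, if α ≤ β then J α * D α else 0 := hB.symm
    _ ≤ ∑ α, if α ≤ β then lam * D α else 0 := by
        refine Finset.sum_le_sum fun α _ => ?_
        split_ifs with hα
        · by_cases hg : g α = 0
          · have hzero : D α = 0 := le_antisymm (hg ▸ hDle α) (hD0 α)
            rw [hzero]; simp
          · exact mul_le_mul_of_nonneg_right ((hJle α).trans (hlam α hg)) (hD0 α)
        · exact le_rfl
    _ = lam * ∑ α, if α ≤ β then D α else 0 := by
        rw [Finset.mul_sum]
        exact Finset.sum_congr rfl fun α _ => by split_ifs <;> ring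
    _ = lam * g β := by rw [hA]
end

section
/- Let $X, Y$ be finite sets and $K : X \times Y \to [0,\infty)$ a nonnegative kernel defining the operator $Kh(x) = \sum_y K(x,y) h(y)$ and adjoint $K^* u(y) = \sum_x K(x,y) u(x)$. Then for any nonnegative functions $f : Y \to [0,\infty)$ and $g : X \to [0,\infty)$, $\sum_x (Kf)(x)^2\, g(x) \leq \Big( \sup_{x \in \operatorname{supp} g} (K K^* g)(x) \Big) \sum_y f(y)^2$. -/
open Finset

theorem stmt9 {X Y : Type*} [Fintype X] [Fintype Y] (K : X → Y → ℝ)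
    (hK : ∀ x y, 0 ≤ K x y) (f : Y → ℝ) (g : X → ℝ)
    (hf : ∀ y, 0 ≤ f y) (hg : ∀ x, 0 ≤ g x) :
    ∑ x, (∑ y, K x y * f y) ^ 2 * g x ≤
      (⨆ x : {x : X // g x ≠ 0}, ∑ y, K x.1 y * ∑ x', K x' y * g x') * ∑ y, f y ^ 2 := by
  set v : X → ℝ := fun x => ∑ y, K x y * f y with hv
  set h : Y → ℝ := fun y => ∑ x, K x y * g x * v x with hh
  set S : ℝ := ⨆ x : {x : X // g x ≠ 0}, ∑ y, K x.1 y * ∑ x', K x' y * g x' with hS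
  set w : X → ℝ := fun x => ∑ y, K x y * ∑ x', K x' y * g x' with hw
  have hvnn : ∀ x, 0 ≤ v x := fun x => Finset.sum_nonneg fun y _ =>
    mul_nonneg (hK x y) (hf y)
  have hSnn : 0 ≤ S := Real.iSup_nonneg fun x => Finset.sum_nonneg fun y _ =>
    mul_nonneg (hK x.1 y) (Finset.sum_nonneg fun x' _ => mul_nonneg (hK x' y) (hg x'))
  set A : ℝ := ∑ x, v x ^ 2 * g x with hA
  have hAnn : 0 ≤ A := Finset.sum_nonneg fun x _ => mul_nonneg (sq_nonneg _) (hg x)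
  have hFnn : (0:ℝ) ≤ ∑ y, f y ^ 2 := Finset.sum_nonneg fun y _ => sq_nonneg _
  -- Step 1 : A = ∑ f h
  have key1 : A = ∑ y, f y * h y := by
    rw [hA]
    calc ∑ x, v x ^ 2 * g x = ∑ x, ∑ y, f y * (K x y * g x * v x) := by
          refine Finset.sum_congr rfl fun x _ => ?_
          have hvx : v x = ∑ y, K x y * f y := rfl
          calc v x ^ 2 * g x = (∑ y, K x y * f y) * (g x * v x) := by
                rw [← hvx]; ring
            _ = ∑ y, K x y * f y * (g x * v x) := Finset.sum_mul ..
            _ = ∑ y, f y * (K x y * g x * v x) := by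
                refine Finset.sum_congr rfl fun y _ => ?_; ring
      _ = ∑ y, ∑ x, f y * (K x y * g x * v x) := Finset.sum_comm
      _ = ∑ y, f y * h y := by
          refine Finset.sum_congr rfl fun y _ => ?_
          rw [← Finset.mul_sum]
  -- Step 2 : Cauchy-Schwarz on ∑ f h
  have cs1 : (∑ y, f y * h y) ^ 2 ≤ (∑ y, f y ^ 2) * ∑ y, h y ^ 2 :=
    Finset.sum_mul_sq_le_sq_mul_sq univ f h
  -- Step 3 : ∑ h² ≤ S * A
  have cs2 : ∀ y, h y ^ 2 ≤ (∑ x, K x y * g x) * ∑ x, K x y * g x * v x ^ 2 := fun y =>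
    Finset.sum_sq_le_sum_mul_sum_of_sq_eq_mul univ (fun x _ => mul_nonneg (hK x y) (hg x))
      (fun x _ => mul_nonneg (mul_nonneg (hK x y) (hg x)) (sq_nonneg _))
      (fun x _ => by ring)
  have hsum : ∑ y, h y ^ 2 ≤ S * A := by
    calc ∑ y, h y ^ 2 ≤ ∑ y, (∑ x, K x y * g x) * ∑ x, K x y * g x * v x ^ 2 :=
          Finset.sum_le_sum fun y _ => cs2 y
      _ = ∑ x, v x ^ 2 * g x * w x := by
          simp_rw [Finset.mul_sum]
          rw [Finset.sum_comm]
          refine Finset.sum_congr rfl fun x _ => ?_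
          show _ = v x ^ 2 * g x * ∑ y, K x y * ∑ x', K x' y * g x'
          rw [Finset.mul_sum]
          refine Finset.sum_congr rfl fun y _ => ?_
          rw [Finset.sum_mul, Finset.mul_sum, Finset.mul_sum]
          refine Finset.sum_congr rfl fun x' _ => ?_
          ring
      _ ≤ ∑ x, v x ^ 2 * g x * S := by
          refine Finset.sum_le_sum fun x _ => ?_
          by_cases hx : g x = 0
          · simp [hx]
          · refine mul_le_mul_of_nonneg_left ?_ (mul_nonneg (sq_nonneg _) (hg x))
            exact le_ciSup (f := fun x : {x : X // g x ≠ 0} =>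
              ∑ y, K x.1 y * ∑ x', K x' y * g x') (Set.finite_range _).bddAbove ⟨x, hx⟩
      _ = S * A := by rw [← Finset.sum_mul, mul_comm]
  -- Conclusion
  have main : A ^ 2 ≤ (∑ y, f y ^ 2) * (S * A) := by
    calc A ^ 2 = (∑ y, f y * h y) ^ 2 := by rw [key1]
      _ ≤ (∑ y, f y ^ 2) * ∑ y, h y ^ 2 := cs1
      _ ≤ (∑ y, f y ^ 2) * (S * A) := mul_le_mul_of_nonneg_left hsum hFnn
  rcases hAnn.eq_or_lt with h0 | h0
  · rw [← h0]; exact mul_nonneg hSnn hFnn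
  · nlinarith [main]
end

section
/- Let $T$ be a finite tree with Hardy operator $I$ and adjoint $I^*$. Let $f, g : T \to [0,\infty)$ with $\operatorname{supp} f \subseteq \{Ig \leq \delta\}$ and $g$ superadditive, and let $\lambda \geq 10\delta > 0$. Define $\varphi := 2\lambda^{-1}\, If \cdot g \cdot \mathbf{1}_{\{Ig \leq 4\lambda\}}$. Then: (a) $I\varphi(\omega) \geq If(\omega)$ for every $\omega \in T$ with $Ig(\omega) \in [\lambda, 2\lambda]$; and (b) $\sum_{T} \varphi^2 \leq \frac{16\,\delta}{\lambda} \sum_T f^2$. -/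
open Finset
open scoped Classical

set_option linter.unusedSectionVars false

section Aux
variable {T : Type*} [Fintype T] [PartialOrder T]

lemma hI_nonneg_s10 (g : T → ℝ) (hg : ∀ a, 0 ≤ g a) (a : T) : 0 ≤ hI g a :=
  Finset.sum_nonneg fun b _ => by split_ifs; exacts [hg b, le_refl 0]

lemma hI_anti (g : T → ℝ) (hg : ∀ a, 0 ≤ g a) {a b : T} (h : a ≤ b) : hI g b ≤ hI g a := by
  apply Finset.sum_le_sum
  intro c _
  split_ifs with h1 h2 h2
  · exact le_refl _
  · exact absurd (h.trans h1) h2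
  · exact hg c
  · exact le_refl _

lemma exists_child {a b : T} (h : a < b) : ∃ c, IsChild c b ∧ a ≤ c := by
  classical
  have hne : (univ.filter fun x => a ≤ x ∧ x < b).Nonempty :=
    ⟨a, by simp [h, le_refl]⟩
  obtain ⟨m, hm, hmax⟩ : ∃ m ∈ (univ.filter fun x => a ≤ x ∧ x < b), ∀ x ∈ (univ.filter fun x => a ≤ x ∧ x < b), ¬ m < x := by
    obtain ⟨m, hm⟩ := Finset.exists_maximal hne
    exact ⟨m, hm.1, fun x hx hlt => hlt.not_ge (hm.2 hx hlt.le)⟩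
  simp only [mem_filter, mem_univ, true_and] at hm
  refine ⟨m, ⟨hm.2, fun e hme heb => ?_⟩, hm.1⟩
  exact hmax e (by simp [mem_filter, (hm.1.trans hme.le), heb]) hme

lemma child_le (g : T → ℝ) (hg : ∀ a, 0 ≤ g a) {c b : T} (hc : IsChild c b) :
    g c ≤ ∑ x, if IsChild x b then g x else 0 := by
  have := Finset.single_le_sum (f := fun x => if IsChild x b then g x else 0)
    (fun x _ => by split_ifs; exacts [hg x, le_refl 0]) (mem_univ c)
  simpa [hc] using this

lemma superadd_mono (g : T → ℝ) (hg : ∀ a, 0 ≤ g a) (hsup : Superadd g) :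
    ∀ b a : T, a ≤ b → g a ≤ g b := by
  have wf : WellFoundedLT T := Finite.to_wellFoundedLT
  intro b
  induction b using WellFounded.induction wf.wf with
  | _ b IH =>
    intro a hab
    rcases eq_or_lt_of_le hab with rfl | hlt
    · exact le_refl _
    · obtain ⟨c, hc, hac⟩ := exists_child hlt
      exact (IH c hc.1 a hac).trans ((child_le g hg hc).trans (hsup b))

lemma exists_parent (htree : IsTreeOrder T) {c b : T} (h : c < b) :
    ∃ p, (IsChild c p ∧ p ≤ b) ∧ ∀ x, IsChild c x → x ≤ b → x = p := by
  classical
  have hne : (univ.filter fun x => c < x ∧ x ≤ b).Nonempty := ⟨b, by simp [h]⟩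
  obtain ⟨m, hm, hmin⟩ : ∃ m ∈ (univ.filter fun x => c < x ∧ x ≤ b), ∀ x ∈ (univ.filter fun x => c < x ∧ x ≤ b), ¬ x < m := by
    obtain ⟨m, hm⟩ := Finset.exists_minimal hne
    exact ⟨m, hm.1, fun x hx hlt => hlt.not_ge (hm.2 hx hlt.le)⟩
  simp only [mem_filter, mem_univ, true_and] at hm
  have hchild : IsChild c m := by
    refine ⟨hm.1, fun e hce hem => ?_⟩
    exact hmin e (by simp [mem_filter, hce, hem.le.trans hm.2]) hem
  refine ⟨m, ⟨hchild, hm.2⟩, fun x hx hxb => ?_⟩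
  rcases htree c x m hx.1.le hm.1.le with h1 | h1
  · rcases eq_or_lt_of_le h1 with rfl | h2
    · rfl
    · exact ((hchild.2 x hx.1 h2)).elim
  · rcases eq_or_lt_of_le h1 with h2 | h2
    · exact h2.symm
    · exact ((hx.2 m hm.1 h2)).elim
end Aux

section Aux2
variable {T : Type*} [Fintype T] [PartialOrder T]

lemma chain_min (htree : IsTreeOrder T) {x : T} {S : Finset T} (hS : S.Nonempty)
    (hx : ∀ a ∈ S, x ≤ a) : ∃ m ∈ S, ∀ a ∈ S, m ≤ a := by
  obtain ⟨m, hm, hmin⟩ : ∃ m ∈ S, ∀ x ∈ S, ¬ x < m := by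
    obtain ⟨m, hm⟩ := Finset.exists_minimal hS
    exact ⟨m, hm.1, fun x hx hlt => hlt.not_ge (hm.2 hx hlt.le)⟩
  refine ⟨m, hm, fun a ha => ?_⟩
  rcases htree x a m (hx a ha) (hx m hm) with h | h
  · rcases eq_or_lt_of_le h with rfl | h2
    · exact le_refl _
    · exact (hmin a ha h2).elim
  · exact h

lemma sum_le_hI (g : T → ℝ) (hg : ∀ a, 0 ≤ g a) {m : T} (S : Finset T)
    (h : ∀ a ∈ S, m ≤ a) : ∑ a ∈ S, g a ≤ hI g m := by
  rw [hI, ← Finset.sum_filter]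
  apply Finset.sum_le_sum_of_subset_of_nonneg
  · intro a ha; simp [h a ha]
  · intro a _ _; exact hg a

lemma sum_delta (htree : IsTreeOrder T) (g : T → ℝ) (b : T) :
    ∑ x, (if x ≤ b then hDelta g x else 0) = g b := by
  have key : ∀ c : T, (∑ x, if x ≤ b ∧ IsChild c x then g c else 0)
      = if c < b then g c else 0 := by
    intro c
    by_cases hcb : c < b
    · obtain ⟨p, ⟨hp, hpb⟩, huniq⟩ := exists_parent htree hcb
      have : ∀ x : T, (x ≤ b ∧ IsChild c x) ↔ x = p := by
        intro x
        constructor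
        · rintro ⟨h1, h2⟩; exact huniq x h2 h1
        · rintro rfl; exact ⟨hpb, hp⟩
      simp only [this]
      simp [hcb]
    · have : ∀ x : T, ¬(x ≤ b ∧ IsChild c x) := by
        rintro x ⟨h1, h2⟩; exact hcb (h2.1.trans_le h1)
      simp [this, hcb]
  have e1 : (∑ x, if x ≤ b then hDelta g x else 0)
      = (∑ x, if x ≤ b then g x else 0) - ∑ x, if x ≤ b then (∑ c, if IsChild c x then g c else 0) else 0 := by
    rw [← Finset.sum_sub_distrib]
    apply Finset.sum_congr rfl
    intro x _
    split_ifs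
    · rfl
    · simp
  have e2 : (∑ x, if x ≤ b then (∑ c, if IsChild c x then g c else 0) else 0)
      = ∑ c, if c < b then g c else 0 := by
    have : ∀ x : T, (if x ≤ b then (∑ c, if IsChild c x then g c else 0) else 0)
        = ∑ c, if x ≤ b ∧ IsChild c x then g c else 0 := by
      intro x
      by_cases h : x ≤ b
      · simp only [h, if_true, true_and]
      · simp [h]
    rw [Finset.sum_congr rfl fun x _ => this x, Finset.sum_comm]
    exact Finset.sum_congr rfl fun c _ => key c
  have e3 : (∑ x, if x ≤ b then g x else 0)
      = g b + ∑ x, if x < b then g x else 0 := by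
    have : ∀ x : T, (if x ≤ b then g x else 0)
        = (if x = b then g x else 0) + (if x < b then g x else 0) := by
      intro x
      rcases eq_or_ne x b with rfl | hne
      · simp
      · by_cases h : x ≤ b
        · simp [hne, lt_of_le_of_ne h hne, h]
        · have : ¬ x < b := fun hlt => h hlt.le
          simp [hne, h, this]
    rw [Finset.sum_congr rfl fun x _ => this x, Finset.sum_add_distrib, Finset.sum_ite_eq' univ b g]
    simp
  rw [e1, e2, e3]
  ring

lemma delta_nonneg (g : T → ℝ) (hsup : Superadd g) (x : T) : 0 ≤ hDelta g x :=
  sub_nonneg.2 (hsup x)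

end Aux2

section Aux3
variable {T : Type*} [Fintype T] [PartialOrder T]

lemma lemE (htree : IsTreeOrder T) (g : T → ℝ) (hg : ∀ a, 0 ≤ g a) (hsup : Superadd g)
    {s : ℝ} (hs : 0 ≤ s) (b : T) :
    ∑ a, (if a ≤ b ∧ hI g a ≤ s then g a ^ 2 else 0) ≤ s * g b := by
  have step1 : ∀ a : T, (if a ≤ b ∧ hI g a ≤ s then g a ^ 2 else 0)
      = ∑ x, (if (a ≤ b ∧ hI g a ≤ s) ∧ x ≤ a then hDelta g x * g a else 0) := by
    intro a
    by_cases h : a ≤ b ∧ hI g a ≤ s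
    · simp only [h, if_true, true_and]
      rw [show g a ^ 2 = (∑ x, if x ≤ a then hDelta g x else 0) * g a by
        rw [sum_delta htree g a]; ring]
      rw [Finset.sum_mul]
      apply Finset.sum_congr rfl
      intro x _
      split_ifs <;> simp
    · simp [h]
  rw [Finset.sum_congr rfl fun a _ => step1 a, Finset.sum_comm]
  have step2 : ∀ x : T,
      (∑ a, if (a ≤ b ∧ hI g a ≤ s) ∧ x ≤ a then hDelta g x * g a else 0)
      = hDelta g x * ∑ a, (if (a ≤ b ∧ hI g a ≤ s) ∧ x ≤ a then g a else 0) := by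
    intro x
    rw [Finset.mul_sum]
    apply Finset.sum_congr rfl
    intro a _
    split_ifs <;> simp
  rw [Finset.sum_congr rfl fun x _ => step2 x]
  have step3 : ∀ x : T,
      (∑ a, if (a ≤ b ∧ hI g a ≤ s) ∧ x ≤ a then g a else 0)
      ≤ (if x ≤ b then s else 0) := by
    intro x
    set S := univ.filter (fun a => (a ≤ b ∧ hI g a ≤ s) ∧ x ≤ a) with hSdef
    rw [show (∑ a, if (a ≤ b ∧ hI g a ≤ s) ∧ x ≤ a then g a else 0) = ∑ a ∈ S, g a by
      rw [hSdef, Finset.sum_filter]]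
    rcases S.eq_empty_or_nonempty with he | hne
    · rw [he]
      simp only [Finset.sum_empty]
      split_ifs <;> [exact hs; exact le_refl 0]
    · obtain ⟨a0, ha0⟩ := hne
      have ha0' := Finset.mem_filter.1 ha0
      have hxb : x ≤ b := ha0'.2.2.trans ha0'.2.1.1
      rw [if_pos hxb]
      obtain ⟨m, hm, hmin⟩ := chain_min htree ⟨a0, ha0⟩
        (fun a ha => (Finset.mem_filter.1 ha).2.2)
      have hms : hI g m ≤ s := (Finset.mem_filter.1 hm).2.1.2
      exact (sum_le_hI g hg S hmin).trans hms
  calc ∑ x, hDelta g x * (∑ a, if (a ≤ b ∧ hI g a ≤ s) ∧ x ≤ a then g a else 0)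
      ≤ ∑ x, hDelta g x * (if x ≤ b then s else 0) := by
        apply Finset.sum_le_sum
        intro x _
        exact mul_le_mul_of_nonneg_left (step3 x) (delta_nonneg g hsup x)
    _ = (∑ x, (if x ≤ b then hDelta g x else 0)) * s := by
        rw [Finset.sum_mul]
        apply Finset.sum_congr rfl
        intro x _
        split_ifs <;> simp
    _ = s * g b := by rw [sum_delta htree g b]; ring

lemma cauchy_step (htree : IsTreeOrder T) (f g : T → ℝ) (hf : ∀ a, 0 ≤ f a)
    (hg : ∀ a, 0 ≤ g a) (δ : ℝ) (hδ : 0 ≤ δ)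
    (hsupp : ∀ a, f a ≠ 0 → hI g a ≤ δ)
    (hmono : ∀ b a : T, a ≤ b → g a ≤ g b) {a : T} (hga : 0 < g a) :
    hI f a ^ 2 ≤ δ * ∑ b, (if a ≤ b then f b ^ 2 / g b else 0) := by
  set S := univ.filter (fun b => a ≤ b ∧ f b ≠ 0) with hSdef
  have h1 : hI f a = ∑ b ∈ S, f b := by
    rw [hI, ← Finset.sum_filter]
    symm
    apply Finset.sum_subset
    · intro b hb
      simp only [hSdef, Finset.mem_filter, Finset.mem_univ, true_and] at hb ⊢
      exact hb.1
    · intro b hb hnb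
      simp only [hSdef, Finset.mem_filter, Finset.mem_univ, true_and] at hb hnb
      by_contra h
      exact hnb ⟨hb, h⟩
  have hq : ∀ b : T, 0 ≤ (if a ≤ b then f b ^ 2 / g b else 0) := by
    intro b
    split_ifs
    · exact div_nonneg (sq_nonneg _) (hg b)
    · exact le_refl 0
  rcases S.eq_empty_or_nonempty with he | hne
  · rw [h1, he]
    simp only [Finset.sum_empty]
    rw [show (0:ℝ) ^ 2 = 0 by ring]
    exact mul_nonneg hδ (Finset.sum_nonneg fun b _ => hq b)
  · have hxS : ∀ b ∈ S, a ≤ b := fun b hb => (Finset.mem_filter.1 hb).2.1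
    obtain ⟨m, hm, hmin⟩ := chain_min htree hne hxS
    have hgpos : ∀ b ∈ S, 0 < g b := fun b hb => lt_of_lt_of_le hga (hmono b a (hxS b hb))
    have cauchy := Finset.sum_mul_sq_le_sq_mul_sq S (fun b => Real.sqrt (g b))
      (fun b => f b / Real.sqrt (g b))
    have e1 : ∑ b ∈ S, Real.sqrt (g b) * (f b / Real.sqrt (g b)) = ∑ b ∈ S, f b := by
      apply Finset.sum_congr rfl
      intro b hb
      rw [mul_div_cancel₀ _ (Real.sqrt_pos.2 (hgpos b hb)).ne']
    have e2 : ∑ b ∈ S, Real.sqrt (g b) ^ 2 = ∑ b ∈ S, g b := by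
      apply Finset.sum_congr rfl
      intro b hb
      exact Real.sq_sqrt (hg b)
    have e3 : ∑ b ∈ S, (f b / Real.sqrt (g b)) ^ 2 = ∑ b ∈ S, f b ^ 2 / g b := by
      apply Finset.sum_congr rfl
      intro b hb
      rw [div_pow, Real.sq_sqrt (hg b)]
    rw [e1, e2, e3] at cauchy
    have hSg : ∑ b ∈ S, g b ≤ δ := by
      have hmδ : hI g m ≤ δ := hsupp m (Finset.mem_filter.1 hm).2.2
      exact (sum_le_hI g hg S hmin).trans hmδ
    have hSq : ∑ b ∈ S, f b ^ 2 / g b ≤ ∑ b, (if a ≤ b then f b ^ 2 / g b else 0) := by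
      rw [← Finset.sum_filter]
      apply Finset.sum_le_sum_of_subset_of_nonneg
      · intro b hb
        simp only [hSdef, Finset.mem_filter, Finset.mem_univ, true_and] at hb ⊢
        exact hb.1
      · intro b _ _
        exact div_nonneg (sq_nonneg _) (hg b)
    have hq2 : 0 ≤ ∑ b ∈ S, f b ^ 2 / g b :=
      Finset.sum_nonneg fun b _ => div_nonneg (sq_nonneg _) (hg b)
    calc hI f a ^ 2 = (∑ b ∈ S, f b) ^ 2 := by rw [h1]
      _ ≤ (∑ b ∈ S, g b) * (∑ b ∈ S, f b ^ 2 / g b) := cauchy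
      _ ≤ δ * ∑ b, (if a ≤ b then f b ^ 2 / g b else 0) :=
          mul_le_mul hSg hSq hq2 hδ

end Aux3

theorem stmt10 {T : Type*} [Fintype T] [PartialOrder T] (htree : IsTreeOrder T)
    (f g : T → ℝ) (hf : ∀ a, 0 ≤ f a) (hg : ∀ a, 0 ≤ g a) (hsup : Superadd g)
    (δ lam : ℝ) (hδ : 0 < δ) (hlam : 10 * δ ≤ lam)
    (hsupp : ∀ a, f a ≠ 0 → hI g a ≤ δ) :
    (∀ ω : T, lam ≤ hI g ω → hI g ω ≤ 2 * lam →
        hI f ω ≤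
          hI (fun a => 2 / lam * hI f a * g a * (if hI g a ≤ 4 * lam then 1 else 0)) ω) ∧
    (∑ a, (2 / lam * hI f a * g a * (if hI g a ≤ 4 * lam then 1 else 0)) ^ 2
        ≤ 16 * δ / lam * ∑ a, f a ^ 2) := by
  have hlampos : (0:ℝ) < lam := lt_of_lt_of_le (by linarith) hlam
  have gmono := superadd_mono g hg hsup
  constructor
  · -- part (a)
    intro ω h1 h2
    set W : T → ℝ := fun b => ∑ a, (if ω ≤ a ∧ a ≤ b then g a else 0) with hWdef
    have hWnonneg : ∀ b, 0 ≤ W b := by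
      intro b
      apply Finset.sum_nonneg
      intro a _
      split_ifs
      · exact hg a
      · exact le_refl 0
    have expand : hI (fun a => 2 / lam * hI f a * g a *
        (if hI g a ≤ 4 * lam then 1 else 0)) ω = ∑ b, 2 / lam * f b * W b := by
      rw [hI]
      have e1 : ∀ a : T, (if ω ≤ a then 2 / lam * hI f a * g a *
          (if hI g a ≤ 4 * lam then 1 else 0) else 0)
          = ∑ b, (if ω ≤ a ∧ a ≤ b then 2 / lam * f b * g a else 0) := by
        intro a
        by_cases h : ω ≤ a
        · have hind : hI g a ≤ 4 * lam := (hI_anti g hg h).trans (h2.trans (by linarith))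
          simp only [h, if_true, hind, true_and, mul_one]
          rw [hI, Finset.mul_sum, Finset.sum_mul]
          apply Finset.sum_congr rfl
          intro b _
          split_ifs <;> ring
        · simp [h]
      rw [Finset.sum_congr rfl fun a _ => e1 a, Finset.sum_comm]
      apply Finset.sum_congr rfl
      intro b _
      rw [hWdef]
      dsimp only
      rw [Finset.mul_sum]
      apply Finset.sum_congr rfl
      intro a _
      split_ifs <;> ring
    rw [expand, hI]
    apply Finset.sum_le_sum
    intro b _
    by_cases hb : ω ≤ b ∧ f b ≠ 0
    · obtain ⟨hωb, hfb⟩ := hb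
      have hIb : hI g b ≤ δ := hsupp b hfb
      -- identity : hI g ω = W b + ∑_{a > b} g a
      have id1 : hI g ω = W b + ∑ a, (if b < a then g a else 0) := by
        rw [hI, hWdef, ← Finset.sum_add_distrib]
        apply Finset.sum_congr rfl
        intro a _
        by_cases hωa : ω ≤ a
        · by_cases hab : a ≤ b
          · have : ¬ b < a := fun hlt => hlt.not_ge hab
            simp [hωa, hab, this]
          · have hba : b ≤ a := (htree ω a b hωa hωb).resolve_left hab
            have hlt : b < a := lt_of_le_of_ne hba (fun h => hab h.symm.le)
            simp [hωa, hab, hlt]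
        · have : ¬ b < a := fun hlt => hωa (hωb.trans hlt.le)
          simp [hωa, this]
      have id2 : hI g b = g b + ∑ a, (if b < a then g a else 0) := by
        rw [hI]
        have : ∀ a : T, (if b ≤ a then g a else 0)
            = (if a = b then g a else 0) + (if b < a then g a else 0) := by
          intro a
          rcases eq_or_ne a b with rfl | hne
          · simp
          · by_cases h : b ≤ a
            · simp [hne, lt_of_le_of_ne h (Ne.symm hne), h]
            · have : ¬ b < a := fun hlt => h hlt.le
              simp [hne, h, this]
        rw [Finset.sum_congr rfl fun a _ => this a, Finset.sum_add_distrib,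
          Finset.sum_ite_eq' univ b g]
        simp
      have hW : lam - δ ≤ W b := by
        have : W b = hI g ω - (hI g b - g b) := by
          rw [id1, id2]; ring
        rw [this]
        have := hg b
        linarith
      have hW2 : lam / 2 ≤ W b := by linarith
      rw [if_pos hωb]
      calc f b = 2 / lam * f b * (lam / 2) := by field_simp
        _ ≤ 2 / lam * f b * W b := by
            apply mul_le_mul_of_nonneg_left hW2
            exact mul_nonneg (by positivity) (hf b)
    · have hle : (if ω ≤ b then f b else 0) = 0 ∨ f b = 0 := by
        by_cases h : ω ≤ b
        · right
          by_contra hfb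
          exact hb ⟨h, hfb⟩
        · left; simp [h]
      have hRnonneg : 0 ≤ 2 / lam * f b * W b :=
        mul_nonneg (mul_nonneg (by positivity) (hf b)) (hWnonneg b)
      rcases hle with h | h
      · rw [h]; exact hRnonneg
      · rw [h]
        simp only [mul_zero, zero_mul]
        split_ifs <;> simp [hRnonneg]
  · -- part (b)
    set q : T → ℝ := fun b => f b ^ 2 / g b with hqdef
    have hqnonneg : ∀ b, 0 ≤ q b := fun b => div_nonneg (sq_nonneg _) (hg b)
    have e0 : ∀ a : T, (2 / lam * hI f a * g a * (if hI g a ≤ 4 * lam then 1 else 0)) ^ 2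
        = 4 / lam ^ 2 * (if hI g a ≤ 4 * lam then hI f a ^ 2 * g a ^ 2 else 0) := by
      intro a
      split_ifs <;> ring
    rw [Finset.sum_congr rfl fun a _ => e0 a, ← Finset.mul_sum]
    set K := ∑ a, (if hI g a ≤ 4 * lam then hI f a ^ 2 * g a ^ 2 else 0) with hKdef
    have hK : K ≤ 4 * lam * δ * ∑ a, f a ^ 2 := by
      have B1 : K ≤ ∑ a, ∑ b, (if a ≤ b ∧ hI g a ≤ 4 * lam then δ * q b * g a ^ 2 else 0) := by
        apply Finset.sum_le_sum
        intro a _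
        by_cases hc : hI g a ≤ 4 * lam
        · rw [if_pos hc]
          rcases (hg a).lt_or_eq with hga | hga
          · have hcs := cauchy_step htree f g hf hg δ hδ.le hsupp gmono hga
            calc hI f a ^ 2 * g a ^ 2
                ≤ (δ * ∑ b, (if a ≤ b then q b else 0)) * g a ^ 2 :=
                  mul_le_mul_of_nonneg_right hcs (sq_nonneg _)
              _ = ∑ b, (if a ≤ b ∧ hI g a ≤ 4 * lam then δ * q b * g a ^ 2 else 0) := by
                  rw [Finset.mul_sum, Finset.sum_mul]
                  apply Finset.sum_congr rfl
                  intro b _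
                  simp only [hc, and_true]
                  split_ifs <;> ring
          · rw [← hga]
            rw [show hI f a ^ 2 * (0:ℝ) ^ 2 = 0 by ring]
            apply Finset.sum_nonneg
            intro b _
            split_ifs with h
            · exact mul_nonneg (mul_nonneg hδ.le (hqnonneg b)) (sq_nonneg _)
            · exact le_refl 0
        · rw [if_neg hc]
          apply Finset.sum_nonneg
          intro b _
          simp only [hc, and_false, if_false]
          exact le_refl 0
      have B2 : ∑ a, ∑ b, (if a ≤ b ∧ hI g a ≤ 4 * lam then δ * q b * g a ^ 2 else 0)
          = ∑ b, δ * q b * ∑ a, (if a ≤ b ∧ hI g a ≤ 4 * lam then g a ^ 2 else 0) := by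
        rw [Finset.sum_comm]
        apply Finset.sum_congr rfl
        intro b _
        rw [Finset.mul_sum]
        apply Finset.sum_congr rfl
        intro a _
        split_ifs <;> ring
      have B3 : ∑ b, δ * q b * (∑ a, (if a ≤ b ∧ hI g a ≤ 4 * lam then g a ^ 2 else 0))
          ≤ ∑ b, δ * q b * (4 * lam * g b) := by
        apply Finset.sum_le_sum
        intro b _
        exact mul_le_mul_of_nonneg_left
          (lemE htree g hg hsup (by linarith) b)
          (mul_nonneg hδ.le (hqnonneg b))
      have B4 : ∑ b, δ * q b * (4 * lam * g b) ≤ ∑ b, 4 * lam * δ * f b ^ 2 := by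
        apply Finset.sum_le_sum
        intro b _
        have hqg : q b * g b ≤ f b ^ 2 := by
          rw [hqdef]
          dsimp only
          rcases eq_or_ne (g b) 0 with h | h
          · rw [h]
            simp [sq_nonneg]
          · rw [div_mul_cancel₀ _ h]
        calc δ * q b * (4 * lam * g b) = 4 * lam * δ * (q b * g b) := by ring
          _ ≤ 4 * lam * δ * f b ^ 2 := by
              apply mul_le_mul_of_nonneg_left hqg
              positivity
      calc K ≤ _ := B1
        _ = _ := B2
        _ ≤ _ := B3
        _ ≤ ∑ b, 4 * lam * δ * f b ^ 2 := B4
        _ = 4 * lam * δ * ∑ a, f a ^ 2 := by rw [Finset.mul_sum]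
    calc 4 / lam ^ 2 * K ≤ 4 / lam ^ 2 * (4 * lam * δ * ∑ a, f a ^ 2) :=
          mul_le_mul_of_nonneg_left hK (by positivity)
      _ = 16 * δ / lam * ∑ a, f a ^ 2 := by
          field_simp
          ring
end

section
/- Let $T^2$ be a bi-tree with tensor-product weight $w = w_1 \otimes w_2 \geq 0$, and let $f : T^2 \to [0,\infty)$ be superadditive in each parameter separately with $\operatorname{supp} f \subseteq \{ \mathbb{I}(wf) \leq \delta \}$. Then $\sum_{T^2} w\, (I_1(w_1 f))^2\, (I_2(w_2 f))^2 \leq 4 \delta^2 \sum_{T^2} w f^2$. -/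
open Finset
open scoped Classical

/- ======================= Auxiliary lemmas ======================= -/

section TreeAux
set_option linter.unusedSectionVars false
set_option linter.unusedVariables false

variable {T : Type*} [Fintype T] [PartialOrder T]

private lemma ite_nn {P : Prop} [Decidable P] {x : ℝ} (hx : 0 ≤ x) :
    0 ≤ if P then x else 0 := by
  split_ifs with h
  · exact hx
  · exact le_rfl

/-- The parent of an element of a tree is unique. -/
private lemma child_unique (h : IsTreeOrder T) {u z z' : T}
    (hz : IsChild u z) (hz' : IsChild u z') : z = z' := by
  rcases h u z z' hz.1.le hz'.1.le with h1 | h1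
  · rcases h1.lt_or_eq with hlt | heq
    · exact (hz'.2 z hz.1 hlt).elim
    · exact heq
  · rcases h1.lt_or_eq with hlt | heq
    · exact (hz.2 z' hz'.1 hlt).elim
    · exact heq.symm

/-- Any element strictly below `y` has a parent which is `≤ y`. -/
private lemma exists_parent_le (h : IsTreeOrder T) {u y : T} (huy : u < y) :
    ∃ z, IsChild u z ∧ z ≤ y := by
  classical
  have hne : (Finset.univ.filter (fun t => u < t ∧ t ≤ y)).Nonempty :=
    ⟨y, by simp [huy]⟩
  obtain ⟨m, hm, hmin⟩ : ∃ m ∈ Finset.univ.filter (fun t => u < t ∧ t ≤ y),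
      ∀ x ∈ Finset.univ.filter (fun t => u < t ∧ t ≤ y), ¬x < m := by
    obtain ⟨m, hm⟩ := Finset.exists_minimal hne
    exact ⟨m, hm.1, fun x hx hxm => absurd (hm.2 hx hxm.le) (not_le_of_gt hxm)⟩
  rw [Finset.mem_filter] at hm
  refine ⟨m, ⟨hm.2.1, fun s hus hsm => ?_⟩, hm.2.2⟩
  exact hmin s (Finset.mem_filter.mpr ⟨Finset.mem_univ s, hus, hsm.le.trans hm.2.2⟩) hsm

/-- Abel / partition identity on a tree: `∑_{z ≤ y} Δφ(z) = φ(y)`. -/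
private lemma sum_delta_eq (h : IsTreeOrder T) (φ : T → ℝ) (y : T) :
    (∑ z, if z ≤ y then hDelta φ z else 0) = φ y := by
  classical
  have key : ∀ z : T, (if z ≤ y then hDelta φ z else 0)
      = (if z ≤ y then φ z else 0) - ∑ u, (if IsChild u z ∧ z ≤ y then φ u else 0) := by
    intro z
    by_cases hz : z ≤ y
    · simp [hz, hDelta]
    · simp [hz]
  have e0 : (∑ z, if z ≤ y then hDelta φ z else 0)
      = (∑ z, if z ≤ y then φ z else 0)
          - ∑ z, ∑ u, (if IsChild u z ∧ z ≤ y then φ u else 0) := by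
    rw [Finset.sum_congr rfl fun z _ => key z, Finset.sum_sub_distrib]
  have hsecond : (∑ z : T, ∑ u : T, if IsChild u z ∧ z ≤ y then φ u else 0)
      = ∑ u : T, (if u < y then φ u else 0) := by
    rw [Finset.sum_comm]
    refine Finset.sum_congr rfl fun u _ => ?_
    by_cases huy : u < y
    · obtain ⟨z₀, hch, hz₀⟩ := exists_parent_le h huy
      rw [if_pos huy]
      rw [Finset.sum_eq_single z₀]
      · rw [if_pos ⟨hch, hz₀⟩]
      · intro z _ hzz
        apply if_neg
        rintro ⟨hc, _⟩
        exact hzz (child_unique h hc hch)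
      · intro hz; exact absurd (Finset.mem_univ z₀) hz
    · rw [if_neg huy]
      apply Finset.sum_eq_zero
      intro z _
      apply if_neg
      rintro ⟨hc, hcy⟩
      exact huy (hc.1.trans_le hcy)
  have hfirst : (∑ z, if z ≤ y then φ z else 0)
      = φ y + ∑ z, (if z < y then φ z else 0) := by
    have e : ∀ z : T, (if z ≤ y then φ z else 0)
        = (if z = y then φ z else 0) + (if z < y then φ z else 0) := by
      intro z
      by_cases hzy : z = y
      · subst hzy; simp
      · by_cases hlt : z < y
        · rw [if_pos hlt.le, if_neg hzy, if_pos hlt, zero_add]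
        · rw [if_neg (fun hle => hlt (lt_of_le_of_ne hle hzy)), if_neg hzy, if_neg hlt,
            add_zero]
    rw [Finset.sum_congr rfl fun z _ => e z, Finset.sum_add_distrib]
    congr 1
    simp
  rw [e0, hsecond, hfirst]
  ring

/-- Chain square inequality: `(I g)(α)^2 ≤ 2 I(g ⋅ I g)(α)` on trees. -/
private lemma chain_sq (h : IsTreeOrder T) (g : T → ℝ) (hg : ∀ x, 0 ≤ g x) (α : T) :
    (∑ b, if α ≤ b then g b else 0) ^ 2
      ≤ 2 * ∑ b, (if α ≤ b then g b * (∑ b', if b ≤ b' then g b' else 0) else 0) := by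
  classical
  have expand : (∑ b, if α ≤ b then g b else 0) ^ 2
      = ∑ b, ∑ b', ((if α ≤ b then g b else 0) * (if α ≤ b' then g b' else 0)) := by
    rw [sq, Finset.sum_mul_sum]
  have rexp : ∀ b : T, (if α ≤ b then g b * (∑ b', if b ≤ b' then g b' else 0) else 0)
      = ∑ b', (if α ≤ b ∧ b ≤ b' then g b * g b' else 0) := by
    intro b
    by_cases hb : α ≤ b
    · rw [if_pos hb, Finset.mul_sum]
      refine Finset.sum_congr rfl fun b' _ => ?_
      by_cases hbb : b ≤ b'
      · rw [if_pos hbb, if_pos ⟨hb, hbb⟩]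
      · rw [if_neg hbb, if_neg (fun hh => hbb hh.2), mul_zero]
    · rw [if_neg hb]
      exact (Finset.sum_eq_zero fun b' _ => if_neg (fun hh => hb hh.1)).symm
  have swap2 : (∑ b : T, ∑ b' : T, (if α ≤ b' ∧ b' ≤ b then g b' * g b else 0))
      = ∑ b : T, ∑ b' : T, (if α ≤ b ∧ b ≤ b' then g b * g b' else 0) :=
    Finset.sum_comm
  have tw : ∀ b b' : T, (if α ≤ b then g b else 0) * (if α ≤ b' then g b' else 0)
      ≤ (if α ≤ b ∧ b ≤ b' then g b * g b' else 0)
        + (if α ≤ b' ∧ b' ≤ b then g b' * g b else 0) := by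
    intro b b'
    have hnn1 : (0:ℝ) ≤ (if α ≤ b ∧ b ≤ b' then g b * g b' else 0) :=
      ite_nn (mul_nonneg (hg b) (hg b'))
    have hnn2 : (0:ℝ) ≤ (if α ≤ b' ∧ b' ≤ b then g b' * g b else 0) :=
      ite_nn (mul_nonneg (hg b') (hg b))
    by_cases hb : α ≤ b
    · by_cases hb' : α ≤ b'
      · rcases h α b b' hb hb' with hbb | hbb
        · rw [if_pos hb, if_pos hb', if_pos ⟨hb, hbb⟩]
          linarith
        · have e2 : (if α ≤ b' ∧ b' ≤ b then g b' * g b else 0) = g b' * g b :=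
            if_pos ⟨hb', hbb⟩
          rw [if_pos hb, if_pos hb', e2]
          have hc : g b * g b' = g b' * g b := mul_comm _ _
          linarith
      · rw [if_neg hb', mul_zero]
        exact add_nonneg hnn1 hnn2
    · rw [if_neg hb, zero_mul]
      exact add_nonneg hnn1 hnn2
  rw [expand]
  calc (∑ b, ∑ b', ((if α ≤ b then g b else 0) * (if α ≤ b' then g b' else 0)))
      ≤ ∑ b, ∑ b', ((if α ≤ b ∧ b ≤ b' then g b * g b' else 0)
          + (if α ≤ b' ∧ b' ≤ b then g b' * g b else 0)) :=
        Finset.sum_le_sum fun b _ => Finset.sum_le_sum fun b' _ => tw b b'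
    _ = (∑ b : T, ∑ b' : T, (if α ≤ b ∧ b ≤ b' then g b * g b' else 0))
          + ∑ b : T, ∑ b' : T, (if α ≤ b' ∧ b' ≤ b then g b' * g b else 0) := by
        rw [← Finset.sum_add_distrib]
        exact Finset.sum_congr rfl fun b _ => Finset.sum_add_distrib
    _ = 2 * ∑ b : T, ∑ b' : T, (if α ≤ b ∧ b ≤ b' then g b * g b' else 0) := by
        rw [swap2]; ring
    _ = 2 * ∑ b, (if α ≤ b then g b * (∑ b', if b ≤ b' then g b' else 0) else 0) := by
        rw [Finset.sum_congr rfl fun b _ => (rexp b).symm]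

end TreeAux

section BiTreeAux

variable {T1 T2 : Type*} [Fintype T1] [PartialOrder T1] [Fintype T2] [PartialOrder T2]

/-- `F(x,y) = ∑_{b ≥ x} w1(b) f(b,y)`, a curried version of `hI1 (w1 ⋅ f)`. -/
private noncomputable def Fop (w1 : T1 → ℝ) (f : T1 × T2 → ℝ) (x : T1) (y : T2) : ℝ :=
  ∑ b, if x ≤ b then w1 b * f (b, y) else 0

/-- `G(x,y) = ∑_{c ≥ y} w2(c) f(x,c)`, a curried version of `hI2 (w2 ⋅ f)`. -/
private noncomputable def Gop (w2 : T2 → ℝ) (f : T1 × T2 → ℝ) (x : T1) (y : T2) : ℝ :=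
  ∑ c, if y ≤ c then w2 c * f (x, c) else 0


private noncomputable def Pop (w1 : T1 → ℝ) (f : T1 × T2 → ℝ) (x : T1) (y : T2) : ℝ :=
  ∑ b, if x ≤ b then w1 b * f (b, y) * Fop w1 f b y else 0

private noncomputable def Qop (w2 : T2 → ℝ) (f : T1 × T2 → ℝ) (x : T1) (y : T2) : ℝ :=
  ∑ c, if y ≤ c then w2 c * f (x, c) * Gop w2 f x c else 0

private noncomputable def Xop (w1 : T1 → ℝ) (w2 : T2 → ℝ) (f : T1 × T2 → ℝ)
    (b : T1) (c : T2) : ℝ :=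
  ∑ y, if y ≤ c then w2 y * (w1 b * f (b, y) * Fop w1 f b y) else 0

private noncomputable def Yop (w1 : T1 → ℝ) (w2 : T2 → ℝ) (f : T1 × T2 → ℝ)
    (b : T1) (c : T2) : ℝ :=
  ∑ x, if x ≤ b then w1 x * (w2 c * f (x, c) * Gop w2 f x c) else 0

private noncomputable def Eop (w1 : T1 → ℝ) (w2 : T2 → ℝ) (f : T1 × T2 → ℝ)
    (a p : T1 × T2) : ℝ :=
  (if a.2 ≤ p.2 then w2 a.2 * (w1 p.1 * f (p.1, a.2) * Fop w1 f p.1 a.2) else 0) *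
  (if a.1 ≤ p.1 then w1 a.1 * (w2 p.2 * f (a.1, p.2) * Gop w2 f a.1 p.2) else 0)

private lemma sum_ite_const_mul {ι : Type*} [Fintype ι] (P : ι → Prop) (k : ℝ) (v : ι → ℝ) :
    (∑ i, (if P i then k * v i else 0)) = k * ∑ i, (if P i then v i else 0) := by
  classical
  rw [Finset.mul_sum]
  exact Finset.sum_congr rfl fun i _ => by split_ifs <;> simp

end BiTreeAux

set_option maxHeartbeats 1000000 in
theorem stmt12 {T1 T2 : Type*} [Fintype T1] [PartialOrder T1] [Fintype T2] [PartialOrder T2]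
    (h1 : IsTreeOrder T1) (h2 : IsTreeOrder T2)
    (w1 : T1 → ℝ) (w2 : T2 → ℝ) (hw1 : ∀ x, 0 ≤ w1 x) (hw2 : ∀ x, 0 ≤ w2 x)
    (f : T1 × T2 → ℝ) (hf : ∀ a, 0 ≤ f a)
    (hs1 : Superadd1 f) (hs2 : Superadd2 f) (δ : ℝ)
    (hsupp : ∀ a, f a ≠ 0 → hI (fun x => w1 x.1 * w2 x.2 * f x) a ≤ δ) :
    ∑ a, w1 a.1 * w2 a.2 * (hI1 (fun x => w1 x.1 * f x) a) ^ 2 *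
        (hI2 (fun x => w2 x.2 * f x) a) ^ 2
      ≤ 4 * δ ^ 2 * ∑ a, w1 a.1 * w2 a.2 * f a ^ 2 := by
  classical
  have hFdef : ∀ a : T1 × T2, hI1 (fun x => w1 x.1 * f x) a = Fop w1 f a.1 a.2 :=
    fun a => rfl
  have hGdef : ∀ a : T1 × T2, hI2 (fun x => w2 x.2 * f x) a = Gop w2 f a.1 a.2 :=
    fun a => rfl
  simp only [hFdef, hGdef]
  -- nonnegativity facts
  have hF0 : ∀ (x : T1) (y : T2), 0 ≤ Fop w1 f x y := fun x y =>
    Finset.sum_nonneg fun b _ => ite_nn (mul_nonneg (hw1 b) (hf _))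
  have hG0 : ∀ (x : T1) (y : T2), 0 ≤ Gop w2 f x y := fun x y =>
    Finset.sum_nonneg fun c _ => ite_nn (mul_nonneg (hw2 c) (hf _))
  have hδf : ∀ p : T1 × T2, 0 ≤ δ * f p := by
    intro p
    rcases eq_or_ne (f p) 0 with h0 | h0
    · simp [h0]
    · have hnn : 0 ≤ hI (fun x => w1 x.1 * w2 x.2 * f x) p := by
        simp only [hI]
        refine Finset.sum_nonneg fun q _ => ?_
        split_ifs
        · exact mul_nonneg (mul_nonneg (hw1 _) (hw2 _)) (hf _)
        · exact le_rfl
      exact mul_nonneg (hnn.trans (hsupp p h0)) (hf p)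
  -- row and column representations of hI(w·f)
  have hIrow : ∀ (x : T1) (z : T2), hI (fun q => w1 q.1 * w2 q.2 * f q) (x, z)
      = ∑ y, if z ≤ y then w2 y * Fop w1 f x y else 0 := by
    intro x z
    simp only [hI]
    rw [Fintype.sum_prod_type, Finset.sum_comm]
    refine Finset.sum_congr rfl fun y _ => ?_
    by_cases hy : z ≤ y
    · rw [if_pos hy]
      show _ = w2 y * ∑ b, (if x ≤ b then w1 b * f (b, y) else 0)
      rw [Finset.mul_sum]
      refine Finset.sum_congr rfl fun x' _ => ?_
      by_cases hx : x ≤ x'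
      · rw [if_pos (Prod.mk_le_mk.mpr ⟨hx, hy⟩), if_pos hx]
        show w1 x' * w2 y * f (x', y) = _
        ring
      · rw [if_neg (fun hq => hx (Prod.mk_le_mk.mp hq).1), if_neg hx, mul_zero]
    · rw [if_neg hy]
      exact Finset.sum_eq_zero fun x' _ =>
        if_neg (fun hq => hy (Prod.mk_le_mk.mp hq).2)
  have hIcol : ∀ (z : T1) (c : T2), hI (fun q => w1 q.1 * w2 q.2 * f q) (z, c)
      = ∑ x, if z ≤ x then w1 x * Gop w2 f x c else 0 := by
    intro z c
    simp only [hI]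
    rw [Fintype.sum_prod_type]
    refine Finset.sum_congr rfl fun x _ => ?_
    by_cases hx : z ≤ x
    · rw [if_pos hx]
      show _ = w1 x * ∑ y, (if c ≤ y then w2 y * f (x, y) else 0)
      rw [Finset.mul_sum]
      refine Finset.sum_congr rfl fun y _ => ?_
      by_cases hy : c ≤ y
      · rw [if_pos (Prod.mk_le_mk.mpr ⟨hx, hy⟩), if_pos hy]
        show w1 x * w2 y * f (x, y) = _
        ring
      · rw [if_neg (fun hq => hy (Prod.mk_le_mk.mp hq).2), if_neg hy, mul_zero]
    · rw [if_neg hx]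
      exact Finset.sum_eq_zero fun y _ =>
        if_neg (fun hq => hx (Prod.mk_le_mk.mp hq).1)
  -- The key superadditivity lemma, second coordinate
  have key2 : ∀ (b : T1) (c : T2),
      (∑ y, if y ≤ c then w2 y * f (b, y) * Fop w1 f b y else 0) ≤ δ * f (b, c) := by
    intro b c
    set d : T2 → ℝ := fun z => hDelta (fun t => f (b, t)) z with hd
    have hd0 : ∀ z, 0 ≤ d z := by
      intro z
      have h := hs2 b z
      simp only [hd, hDelta]
      linarith
    have hdle : ∀ z, d z ≤ f (b, z) := by
      intro z
      simp only [hd, hDelta]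
      have h0 : 0 ≤ ∑ u, (if IsChild u z then f (b, u) else 0) :=
        Finset.sum_nonneg fun u _ => ite_nn (hf _)
      linarith
    have hpart : ∀ y, (∑ z, if z ≤ y then d z else 0) = f (b, y) :=
      fun y => sum_delta_eq h2 _ y
    have hrw : ∀ y, (if y ≤ c then w2 y * f (b, y) * Fop w1 f b y else 0)
        = ∑ z, (if z ≤ y ∧ y ≤ c then d z * (w2 y * Fop w1 f b y) else 0) := by
      intro y
      by_cases hy : y ≤ c
      · rw [if_pos hy]
        have e : w2 y * f (b, y) * Fop w1 f b y
            = (∑ z, if z ≤ y then d z else 0) * (w2 y * Fop w1 f b y) := by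
          rw [hpart y]; ring
        rw [e, Finset.sum_mul]
        refine Finset.sum_congr rfl fun z _ => ?_
        by_cases hz : z ≤ y
        · rw [if_pos hz, if_pos ⟨hz, hy⟩]
        · rw [if_neg hz, if_neg (fun hh => hz hh.1), zero_mul]
      · rw [if_neg hy]
        exact (Finset.sum_eq_zero fun z _ => if_neg fun hh => hy hh.2).symm
    have e1 : (∑ y, if y ≤ c then w2 y * f (b, y) * Fop w1 f b y else 0)
        = ∑ z, ∑ y, (if z ≤ y ∧ y ≤ c then d z * (w2 y * Fop w1 f b y) else 0) := by
      rw [Finset.sum_congr rfl fun y _ => hrw y, Finset.sum_comm]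
    rw [e1]
    have hz_bound : ∀ z,
        (∑ y, if z ≤ y ∧ y ≤ c then d z * (w2 y * Fop w1 f b y) else 0)
          ≤ (if z ≤ c then d z else 0) * δ := by
      intro z
      by_cases hzc : z ≤ c
      · rw [if_pos hzc]
        rcases (hd0 z).eq_or_lt with hdz | hdz
        · rw [← hdz, zero_mul]
          apply le_of_eq
          refine Finset.sum_eq_zero fun y _ => ?_
          split_ifs with hcond
          · exact zero_mul _
          · rfl
        · have hfz : f (b, z) ≠ 0 := by
            intro h0
            have h2' := hdle z
            rw [h0] at h2'
            linarith
          have hb := hsupp (b, z) hfz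
          rw [hIrow b z] at hb
          calc (∑ y, if z ≤ y ∧ y ≤ c then d z * (w2 y * Fop w1 f b y) else 0)
              ≤ ∑ y, (if z ≤ y then d z * (w2 y * Fop w1 f b y) else 0) := by
                refine Finset.sum_le_sum fun y _ => ?_
                by_cases hA : z ≤ y ∧ y ≤ c
                · rw [if_pos hA, if_pos hA.1]
                · rw [if_neg hA]
                  exact ite_nn (mul_nonneg (hd0 z) (mul_nonneg (hw2 y) (hF0 b y)))
            _ = d z * ∑ y, (if z ≤ y then w2 y * Fop w1 f b y else 0) :=
                sum_ite_const_mul (fun y => z ≤ y) (d z) (fun y => w2 y * Fop w1 f b y)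
            _ ≤ d z * δ := mul_le_mul_of_nonneg_left hb (hd0 z)
      · rw [if_neg hzc, zero_mul]
        apply le_of_eq
        exact Finset.sum_eq_zero fun y _ => if_neg fun hh => hzc (hh.1.trans hh.2)
    calc (∑ z, ∑ y, (if z ≤ y ∧ y ≤ c then d z * (w2 y * Fop w1 f b y) else 0))
        ≤ ∑ z, (if z ≤ c then d z else 0) * δ :=
          Finset.sum_le_sum fun z _ => hz_bound z
      _ = (∑ z, if z ≤ c then d z else 0) * δ := by rw [Finset.sum_mul]
      _ = f (b, c) * δ := by rw [hpart c]
      _ = δ * f (b, c) := mul_comm _ _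
  -- The key superadditivity lemma, first coordinate
  have key1 : ∀ (b : T1) (c : T2),
      (∑ x, if x ≤ b then w1 x * f (x, c) * Gop w2 f x c else 0) ≤ δ * f (b, c) := by
    intro b c
    set d : T1 → ℝ := fun z => hDelta (fun t => f (t, c)) z with hd
    have hd0 : ∀ z, 0 ≤ d z := by
      intro z
      have h := hs1 z c
      simp only [hd, hDelta]
      linarith
    have hdle : ∀ z, d z ≤ f (z, c) := by
      intro z
      simp only [hd, hDelta]
      have h0 : 0 ≤ ∑ u, (if IsChild u z then f (u, c) else 0) :=
        Finset.sum_nonneg fun u _ => ite_nn (hf _)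
      linarith
    have hpart : ∀ x, (∑ z, if z ≤ x then d z else 0) = f (x, c) :=
      fun x => sum_delta_eq h1 _ x
    have hrw : ∀ x, (if x ≤ b then w1 x * f (x, c) * Gop w2 f x c else 0)
        = ∑ z, (if z ≤ x ∧ x ≤ b then d z * (w1 x * Gop w2 f x c) else 0) := by
      intro x
      by_cases hx : x ≤ b
      · rw [if_pos hx]
        have e : w1 x * f (x, c) * Gop w2 f x c
            = (∑ z, if z ≤ x then d z else 0) * (w1 x * Gop w2 f x c) := by
          rw [hpart x]; ring
        rw [e, Finset.sum_mul]
        refine Finset.sum_congr rfl fun z _ => ?_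
        by_cases hz : z ≤ x
        · rw [if_pos hz, if_pos ⟨hz, hx⟩]
        · rw [if_neg hz, if_neg (fun hh => hz hh.1), zero_mul]
      · rw [if_neg hx]
        exact (Finset.sum_eq_zero fun z _ => if_neg fun hh => hx hh.2).symm
    have e1 : (∑ x, if x ≤ b then w1 x * f (x, c) * Gop w2 f x c else 0)
        = ∑ z, ∑ x, (if z ≤ x ∧ x ≤ b then d z * (w1 x * Gop w2 f x c) else 0) := by
      rw [Finset.sum_congr rfl fun x _ => hrw x, Finset.sum_comm]
    rw [e1]
    have hz_bound : ∀ z,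
        (∑ x, if z ≤ x ∧ x ≤ b then d z * (w1 x * Gop w2 f x c) else 0)
          ≤ (if z ≤ b then d z else 0) * δ := by
      intro z
      by_cases hzb : z ≤ b
      · rw [if_pos hzb]
        rcases (hd0 z).eq_or_lt with hdz | hdz
        · rw [← hdz, zero_mul]
          apply le_of_eq
          refine Finset.sum_eq_zero fun x _ => ?_
          split_ifs with hcond
          · exact zero_mul _
          · rfl
        · have hfz : f (z, c) ≠ 0 := by
            intro h0
            have h2' := hdle z
            rw [h0] at h2'
            linarith
          have hb := hsupp (z, c) hfz
          rw [hIcol z c] at hb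
          calc (∑ x, if z ≤ x ∧ x ≤ b then d z * (w1 x * Gop w2 f x c) else 0)
              ≤ ∑ x, (if z ≤ x then d z * (w1 x * Gop w2 f x c) else 0) := by
                refine Finset.sum_le_sum fun x _ => ?_
                by_cases hA : z ≤ x ∧ x ≤ b
                · rw [if_pos hA, if_pos hA.1]
                · rw [if_neg hA]
                  exact ite_nn (mul_nonneg (hd0 z) (mul_nonneg (hw1 x) (hG0 x c)))
            _ = d z * ∑ x, (if z ≤ x then w1 x * Gop w2 f x c else 0) :=
                sum_ite_const_mul (fun x => z ≤ x) (d z) (fun x => w1 x * Gop w2 f x c)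
            _ ≤ d z * δ := mul_le_mul_of_nonneg_left hb (hd0 z)
      · rw [if_neg hzb, zero_mul]
        apply le_of_eq
        exact Finset.sum_eq_zero fun x _ => if_neg fun hh => hzb (hh.1.trans hh.2)
    calc (∑ z, ∑ x, (if z ≤ x ∧ x ≤ b then d z * (w1 x * Gop w2 f x c) else 0))
        ≤ ∑ z, (if z ≤ b then d z else 0) * δ :=
          Finset.sum_le_sum fun z _ => hz_bound z
      _ = (∑ z, if z ≤ b then d z else 0) * δ := by rw [Finset.sum_mul]
      _ = f (b, c) * δ := by rw [hpart b]
      _ = δ * f (b, c) := mul_comm _ _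
  -- chain square bounds
  have hFsq : ∀ a : T1 × T2, Fop w1 f a.1 a.2 ^ 2 ≤ 2 * Pop w1 f a.1 a.2 := by
    intro a
    exact chain_sq h1 (fun b => w1 b * f (b, a.2)) (fun b => mul_nonneg (hw1 b) (hf _)) a.1
  have hGsq : ∀ a : T1 × T2, Gop w2 f a.1 a.2 ^ 2 ≤ 2 * Qop w2 f a.1 a.2 := by
    intro a
    exact chain_sq h2 (fun c => w2 c * f (a.1, c)) (fun c => mul_nonneg (hw2 c) (hf _)) a.2
  have hP0 : ∀ a : T1 × T2, 0 ≤ Pop w1 f a.1 a.2 := fun a =>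
    Finset.sum_nonneg fun b _ =>
      ite_nn (mul_nonneg (mul_nonneg (hw1 b) (hf _)) (hF0 b a.2))
  have hQ0 : ∀ a : T1 × T2, 0 ≤ Qop w2 f a.1 a.2 := fun a =>
    Finset.sum_nonneg fun c _ =>
      ite_nn (mul_nonneg (mul_nonneg (hw2 c) (hf _)) (hG0 a.1 c))
  -- bounds on X and Y
  have hXle : ∀ (b : T1) (c : T2), Xop w1 w2 f b c ≤ w1 b * (δ * f (b, c)) := by
    intro b c
    have e : Xop w1 w2 f b c
        = w1 b * ∑ y, (if y ≤ c then w2 y * f (b, y) * Fop w1 f b y else 0) := by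
      show (∑ y, if y ≤ c then w2 y * (w1 b * f (b, y) * Fop w1 f b y) else 0) = _
      rw [← sum_ite_const_mul (fun y => y ≤ c) (w1 b)
        (fun y => w2 y * f (b, y) * Fop w1 f b y)]
      refine Finset.sum_congr rfl fun y _ => ?_
      split_ifs <;> ring
    rw [e]
    exact mul_le_mul_of_nonneg_left (key2 b c) (hw1 b)
  have hYle : ∀ (b : T1) (c : T2), Yop w1 w2 f b c ≤ w2 c * (δ * f (b, c)) := by
    intro b c
    have e : Yop w1 w2 f b c
        = w2 c * ∑ x, (if x ≤ b then w1 x * f (x, c) * Gop w2 f x c else 0) := by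
      show (∑ x, if x ≤ b then w1 x * (w2 c * f (x, c) * Gop w2 f x c) else 0) = _
      rw [← sum_ite_const_mul (fun x => x ≤ b) (w2 c)
        (fun x => w1 x * f (x, c) * Gop w2 f x c)]
      refine Finset.sum_congr rfl fun x _ => ?_
      split_ifs <;> ring
    rw [e]
    exact mul_le_mul_of_nonneg_left (key1 b c) (hw2 c)
  have hY0 : ∀ (b : T1) (c : T2), 0 ≤ Yop w1 w2 f b c := fun b c =>
    Finset.sum_nonneg fun x _ =>
      ite_nn (mul_nonneg (hw1 x) (mul_nonneg (mul_nonneg (hw2 c) (hf _)) (hG0 x c)))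
  -- Fubini
  have fub : (∑ a : T1 × T2, w1 a.1 * w2 a.2 * (Pop w1 f a.1 a.2 * Qop w2 f a.1 a.2))
      = ∑ b : T1, ∑ c : T2, Xop w1 w2 f b c * Yop w1 w2 f b c := by
    have stepA : ∀ a : T1 × T2, w1 a.1 * w2 a.2 * (Pop w1 f a.1 a.2 * Qop w2 f a.1 a.2)
        = ∑ p : T1 × T2, Eop w1 w2 f a p := by
      intro a
      rw [Fintype.sum_prod_type]
      have e1 : ∀ (b : T1) (c : T2), Eop w1 w2 f a (b, c)
          = (if a.1 ≤ b then w2 a.2 * (w1 b * f (b, a.2) * Fop w1 f b a.2) else 0)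
            * (if a.2 ≤ c then w1 a.1 * (w2 c * f (a.1, c) * Gop w2 f a.1 c) else 0) := by
        intro b c
        simp only [Eop]
        split_ifs <;> ring
      calc w1 a.1 * w2 a.2 * (Pop w1 f a.1 a.2 * Qop w2 f a.1 a.2)
          = (w2 a.2 * Pop w1 f a.1 a.2) * (w1 a.1 * Qop w2 f a.1 a.2) := by ring
        _ = (∑ b, if a.1 ≤ b then w2 a.2 * (w1 b * f (b, a.2) * Fop w1 f b a.2) else 0)
            * (∑ c, if a.2 ≤ c then w1 a.1 * (w2 c * f (a.1, c) * Gop w2 f a.1 c) else 0) := by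
            rw [sum_ite_const_mul (fun b => a.1 ≤ b) (w2 a.2)
              (fun b => w1 b * f (b, a.2) * Fop w1 f b a.2),
              sum_ite_const_mul (fun c => a.2 ≤ c) (w1 a.1)
              (fun c => w2 c * f (a.1, c) * Gop w2 f a.1 c)]
            rfl
        _ = ∑ b, ∑ c, ((if a.1 ≤ b then w2 a.2 * (w1 b * f (b, a.2) * Fop w1 f b a.2) else 0)
            * (if a.2 ≤ c then w1 a.1 * (w2 c * f (a.1, c) * Gop w2 f a.1 c) else 0)) :=
            Finset.sum_mul_sum _ _ _ _
        _ = ∑ b, ∑ c, Eop w1 w2 f a (b, c) :=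
            Finset.sum_congr rfl fun b _ => Finset.sum_congr rfl fun c _ => (e1 b c).symm
    have stepC : ∀ p : T1 × T2,
        (∑ a : T1 × T2, Eop w1 w2 f a p) = Xop w1 w2 f p.1 p.2 * Yop w1 w2 f p.1 p.2 := by
      intro p
      rw [Fintype.sum_prod_type]
      have e2 : ∀ (x : T1) (y : T2), Eop w1 w2 f (x, y) p
          = (if y ≤ p.2 then w2 y * (w1 p.1 * f (p.1, y) * Fop w1 f p.1 y) else 0)
            * (if x ≤ p.1 then w1 x * (w2 p.2 * f (x, p.2) * Gop w2 f x p.2) else 0) := by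
        intro x y
        simp only [Eop]
      rw [Finset.sum_congr rfl fun x _ => Finset.sum_congr rfl fun y _ => e2 x y]
      have e3 : ∀ x : T1,
          (∑ y, ((if y ≤ p.2 then w2 y * (w1 p.1 * f (p.1, y) * Fop w1 f p.1 y) else 0)
            * (if x ≤ p.1 then w1 x * (w2 p.2 * f (x, p.2) * Gop w2 f x p.2) else 0)))
          = (∑ y, if y ≤ p.2 then w2 y * (w1 p.1 * f (p.1, y) * Fop w1 f p.1 y) else 0)
            * (if x ≤ p.1 then w1 x * (w2 p.2 * f (x, p.2) * Gop w2 f x p.2) else 0) :=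
        fun x => (Finset.sum_mul _ _ _).symm
      rw [Finset.sum_congr rfl fun x _ => e3 x, ← Finset.mul_sum]
      rfl
    calc (∑ a : T1 × T2, w1 a.1 * w2 a.2 * (Pop w1 f a.1 a.2 * Qop w2 f a.1 a.2))
        = ∑ a : T1 × T2, ∑ p : T1 × T2, Eop w1 w2 f a p :=
          Finset.sum_congr rfl fun a _ => stepA a
      _ = ∑ p : T1 × T2, ∑ a : T1 × T2, Eop w1 w2 f a p := Finset.sum_comm
      _ = ∑ p : T1 × T2, Xop w1 w2 f p.1 p.2 * Yop w1 w2 f p.1 p.2 :=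
          Finset.sum_congr rfl fun p _ => stepC p
      _ = ∑ b : T1, ∑ c : T2, Xop w1 w2 f b c * Yop w1 w2 f b c := by
          rw [Fintype.sum_prod_type]
  -- final assembly
  calc (∑ a : T1 × T2, w1 a.1 * w2 a.2 * Fop w1 f a.1 a.2 ^ 2 * Gop w2 f a.1 a.2 ^ 2)
      ≤ ∑ a : T1 × T2, 4 * (w1 a.1 * w2 a.2 * (Pop w1 f a.1 a.2 * Qop w2 f a.1 a.2)) := by
        refine Finset.sum_le_sum fun a _ => ?_
        have hW : 0 ≤ w1 a.1 * w2 a.2 := mul_nonneg (hw1 _) (hw2 _)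
        have hmul : Fop w1 f a.1 a.2 ^ 2 * Gop w2 f a.1 a.2 ^ 2
            ≤ (2 * Pop w1 f a.1 a.2) * (2 * Qop w2 f a.1 a.2) :=
          mul_le_mul (hFsq a) (hGsq a) (sq_nonneg _) (by linarith [hP0 a])
        calc w1 a.1 * w2 a.2 * Fop w1 f a.1 a.2 ^ 2 * Gop w2 f a.1 a.2 ^ 2
            = (w1 a.1 * w2 a.2) * (Fop w1 f a.1 a.2 ^ 2 * Gop w2 f a.1 a.2 ^ 2) := by ring
          _ ≤ (w1 a.1 * w2 a.2) * ((2 * Pop w1 f a.1 a.2) * (2 * Qop w2 f a.1 a.2)) :=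
              mul_le_mul_of_nonneg_left hmul hW
          _ = 4 * (w1 a.1 * w2 a.2 * (Pop w1 f a.1 a.2 * Qop w2 f a.1 a.2)) := by ring
    _ = 4 * ∑ a : T1 × T2, w1 a.1 * w2 a.2 * (Pop w1 f a.1 a.2 * Qop w2 f a.1 a.2) := by
        rw [← Finset.mul_sum]
    _ = 4 * ∑ b : T1, ∑ c : T2, Xop w1 w2 f b c * Yop w1 w2 f b c := by rw [fub]
    _ ≤ 4 * ∑ b : T1, ∑ c : T2, (w1 b * (δ * f (b, c))) * (w2 c * (δ * f (b, c))) := by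
        refine mul_le_mul_of_nonneg_left ?_ (by norm_num)
        refine Finset.sum_le_sum fun b _ => Finset.sum_le_sum fun c _ => ?_
        exact mul_le_mul (hXle b c) (hYle b c) (hY0 b c)
          (mul_nonneg (hw1 b) (hδf (b, c)))
    _ = 4 * (δ ^ 2 * ∑ a : T1 × T2, w1 a.1 * w2 a.2 * f a ^ 2) := by
        congr 1
        rw [Fintype.sum_prod_type (f := fun a : T1 × T2 => w1 a.1 * w2 a.2 * f a ^ 2),
          Finset.mul_sum]
        refine Finset.sum_congr rfl fun b _ => ?_
        rw [Finset.mul_sum]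
        refine Finset.sum_congr rfl fun c _ => ?_
        show (w1 b * (δ * f (b, c))) * (w2 c * (δ * f (b, c)))
            = δ ^ 2 * (w1 b * w2 c * f (b, c) ^ 2)
        ring
    _ = 4 * δ ^ 2 * ∑ a : T1 × T2, w1 a.1 * w2 a.2 * f a ^ 2 := by ring
end
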